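/- arXiv:0705.3365 — 5 statements merged into one kernel-verified Lean document; each statement's English description precedes it below -/
import Mathlib

section
/- Let F be an m×n real matrix, C : [a,b] → Mat(m,n,ℝ) a continuous matrix-valued function, and define the operator D on the domain W = {x ∈ L²([a,b];ℝⁿ) : F·x is absolutely continuous with derivative in L²} by D x = (d/dt(F·x) − C(·)x, (F·x)(a)) ∈ L²([a,b];ℝᵐ) × ℝᵐ. Then D is a closed operator: if xₙ ∈ W, xₙ → x in L², and D xₙ → (f, f₀) in L² × ℝᵐ, then x ∈ W and D x = (f, f₀). -/
open MeasureTheory Set Filter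

set_option maxHeartbeats 1000000 in
/-- Closedness of the operator `D x = ((F·x)' − C(·)x, (F·x)(a))`:
if `xₙ` lies in the domain (with AC representative `hₙ` of `F·xₙ` having `L²` derivative `gₙ`),
`xₙ → x` in `L²` and `D xₙ → (f, f₀)`, then `x` lies in the domain and `D x = (f, f₀)`. -/
theorem closedness_of_D {m n : ℕ} (F : Matrix (Fin m) (Fin n) ℝ)
    (a b : ℝ) (hab : a < b)
    (C : ℝ → Matrix (Fin m) (Fin n) ℝ) (hC : ContinuousOn C (Icc a b))
    (μ : Measure ℝ) (hμ : μ = volume.restrict (Icc a b))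
    (xs : ℕ → ℝ → Fin n → ℝ) (hs gs : ℕ → ℝ → Fin m → ℝ)
    (hxs : ∀ k, MemLp (xs k) 2 μ)
    (hgs : ∀ k, MemLp (gs k) 2 μ)
    (hrep : ∀ k, ∀ t ∈ Icc a b, hs k t = hs k a + ∫ s in a..t, gs k s)
    (hae : ∀ k, ∀ᵐ t ∂μ, F.mulVec (xs k t) = hs k t)
    (x : ℝ → Fin n → ℝ) (hx : MemLp x 2 μ)
    (f : ℝ → Fin m → ℝ) (hf : MemLp f 2 μ) (f₀ : Fin m → ℝ)
    (hconv_x : Tendsto (fun k => eLpNorm (fun t => xs k t - x t) 2 μ) atTop (nhds 0))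
    (hconv_D : Tendsto
      (fun k => eLpNorm (fun t => (gs k t - (C t).mulVec (xs k t)) - f t) 2 μ) atTop (nhds 0))
    (hconv_init : Tendsto (fun k => hs k a) atTop (nhds f₀)) :
    ∃ h g : ℝ → Fin m → ℝ, MemLp g 2 μ ∧
      (∀ t ∈ Icc a b, h t = h a + ∫ s in a..t, g s) ∧
      (∀ᵐ t ∂μ, F.mulVec (x t) = h t) ∧
      (∀ᵐ t ∂μ, g t - (C t).mulVec (x t) = f t) ∧
      h a = f₀ := by
  letI : TopologicalSpace.PseudoMetrizableSpace (Matrix (Fin m) (Fin n) ℝ) :=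
    inferInstanceAs (TopologicalSpace.PseudoMetrizableSpace (Fin m → Fin n → ℝ))
  have hμfin : IsFiniteMeasure μ := by
    refine ⟨?_⟩
    rw [hμ, Measure.restrict_apply_univ, Real.volume_Icc]
    exact ENNReal.ofReal_lt_top
  have hmem : ∀ᵐ t ∂μ, t ∈ Icc a b := by
    rw [hμ]; exact ae_restrict_mem measurableSet_Icc
  -- The continuous-linear-map picture of matrix-vector multiplication.
  let Ψ : Matrix (Fin m) (Fin n) ℝ →ₗ[ℝ] ((Fin n → ℝ) →L[ℝ] (Fin m → ℝ)) :=
    { toFun := fun A => LinearMap.toContinuousLinearMap A.mulVecLin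
      map_add' := fun A B => by ext v i; simp [Matrix.add_mulVec]
      map_smul' := fun c A => by ext v i; simp [Matrix.smul_mulVec] }
  have hΨ : ∀ (A : Matrix (Fin m) (Fin n) ℝ) v, Ψ A v = A.mulVec v := fun A v => rfl
  have hΨc : Continuous Ψ := Ψ.continuous_of_finiteDimensional
  obtain ⟨K, hK⟩ : ∃ K, ∀ t ∈ Icc a b, ‖Ψ (C t)‖ ≤ K :=
    isCompact_Icc.exists_bound_of_continuousOn (hΨc.comp_continuousOn hC)
  -- measurability of `t ↦ (C t) · (u t)`
  have haesm : ∀ (u : ℝ → Fin n → ℝ), AEStronglyMeasurable u μ →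
      AEStronglyMeasurable (fun t => (C t).mulVec (u t)) μ := by
    intro u hu
    have hCm : AEStronglyMeasurable C μ := by
      rw [hμ]; exact hC.aestronglyMeasurable measurableSet_Icc
    have : AEStronglyMeasurable (fun t => Ψ (C t) (u t)) μ :=
      isBoundedBilinearMap_apply.continuous.comp_aestronglyMeasurable
        ((hΨc.comp_aestronglyMeasurable hCm).prodMk hu)
    simpa only [hΨ] using this
  -- the uniform bound
  have hbound : ∀ (u : ℝ → Fin n → ℝ), ∀ᵐ t ∂μ, ‖(C t).mulVec (u t)‖ ≤ K * ‖u t‖ := by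
    intro u
    filter_upwards [hmem] with t ht
    calc ‖(C t).mulVec (u t)‖ = ‖Ψ (C t) (u t)‖ := by rw [hΨ]
      _ ≤ ‖Ψ (C t)‖ * ‖u t‖ := (Ψ (C t)).le_opNorm _
      _ ≤ K * ‖u t‖ := mul_le_mul_of_nonneg_right (hK t ht) (norm_nonneg _)
  have hCmem : ∀ (u : ℝ → Fin n → ℝ), MemLp u 2 μ →
      MemLp (fun t => (C t).mulVec (u t)) 2 μ := fun u hu =>
    MemLp.of_le_mul hu (haesm u hu.aestronglyMeasurable) (hbound u)
  have hCx : MemLp (fun t => (C t).mulVec (x t)) 2 μ := hCmem x hx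
  set g : ℝ → Fin m → ℝ := fun t => f t + (C t).mulVec (x t) with hgdef
  have hg : MemLp g 2 μ := hf.add hCx
  set h : ℝ → Fin m → ℝ := fun t => f₀ + ∫ s in a..t, g s with hhdef
  have hha : h a = f₀ := by simp [hhdef]
  -- L² convergence of `gs k` to `g`
  have hL2 : Tendsto (fun k => eLpNorm (fun t => gs k t - g t) 2 μ) atTop (nhds 0) := by
    have hbd : ∀ k, eLpNorm (fun t => gs k t - g t) 2 μ ≤
        eLpNorm (fun t => (gs k t - (C t).mulVec (xs k t)) - f t) 2 μ +
          ENNReal.ofReal K * eLpNorm (fun t => xs k t - x t) 2 μ := by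
      intro k
      have heq : (fun t => gs k t - g t) =
          fun t => ((gs k t - (C t).mulVec (xs k t)) - f t) +
            (C t).mulVec (fun j => xs k t j - x t j) := by
        funext t
        have : (C t).mulVec (fun j => xs k t j - x t j) =
            (C t).mulVec (xs k t) - (C t).mulVec (x t) := by
          rw [← Matrix.mulVec_sub]; rfl
        rw [this, hgdef]
        beta_reduce
        abel
      rw [heq]
      refine (eLpNorm_add_le ?_ ?_ one_le_two).trans ?_
      · exact (((hgs k).sub (hCmem (xs k) (hxs k))).sub hf).aestronglyMeasurable
      · exact haesm _ (((hxs k).sub hx).aestronglyMeasurable)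
      refine add_le_add le_rfl ?_
      have := eLpNorm_le_mul_eLpNorm_of_ae_le_mul
        (hbound (fun t => fun j => xs k t j - x t j)) (μ := μ) 2
      exact this.trans (le_of_eq rfl)
    have hlim : Tendsto (fun k =>
        eLpNorm (fun t => (gs k t - (C t).mulVec (xs k t)) - f t) 2 μ +
          ENNReal.ofReal K * eLpNorm (fun t => xs k t - x t) 2 μ) atTop (nhds 0) := by
      have h2 : Tendsto (fun k => ENNReal.ofReal K * eLpNorm (fun t => xs k t - x t) 2 μ)
          atTop (nhds (ENNReal.ofReal K * 0)) :=
        ENNReal.Tendsto.const_mul hconv_x (Or.inr ENNReal.ofReal_ne_top)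
      simpa using hconv_D.add h2
    exact tendsto_of_tendsto_of_tendsto_of_le_of_le tendsto_const_nhds hlim
      (fun k => zero_le) hbd
  -- L¹ convergence of `gs k` to `g`
  have hμuniv : μ Set.univ ≠ ⊤ := by
    rw [hμ, Measure.restrict_apply_univ, Real.volume_Icc]
    exact ENNReal.ofReal_ne_top
  have hL1 : Tendsto (fun k => eLpNorm (fun t => gs k t - g t) 1 μ) atTop (nhds 0) := by
    set c : ENNReal := μ Set.univ ^ (1 / (1 : ENNReal).toReal - 1 / (2 : ENNReal).toReal) with hcdef
    have hc : c ≠ ⊤ := by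
      refine ENNReal.rpow_ne_top_of_nonneg ?_ hμuniv
      norm_num
    have hbd : ∀ k, eLpNorm (fun t => gs k t - g t) 1 μ ≤
        eLpNorm (fun t => gs k t - g t) 2 μ * c :=
      fun k => eLpNorm_le_eLpNorm_mul_rpow_measure_univ one_le_two
        (((hgs k).sub hg).aestronglyMeasurable)
    have hlim : Tendsto (fun k => eLpNorm (fun t => gs k t - g t) 2 μ * c) atTop
        (nhds 0) := by
      have := ENNReal.Tendsto.mul_const hL2 (Or.inr hc)
      simpa using this
    exact tendsto_of_tendsto_of_tendsto_of_le_of_le tendsto_const_nhds hlim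
      (fun k => zero_le) hbd
  have hL1r : Tendsto (fun k => (eLpNorm (fun t => gs k t - g t) 1 μ).toReal) atTop
      (nhds 0) := by
    have := (ENNReal.tendsto_toReal (by simp : (0:ENNReal) ≠ ⊤)).comp hL1
    exact this
  -- interval integrability
  have hInt : ∀ (u : ℝ → Fin m → ℝ), MemLp u 2 μ → ∀ t ∈ Icc a b,
      IntervalIntegrable u volume a t := by
    intro u hu t ht
    have hint : IntegrableOn u (Icc a b) volume := by
      have := hu.integrable one_le_two
      rwa [hμ] at this
    have hsub : uIcc a t ⊆ Icc a b := by
      rw [uIcc_of_le ht.1]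
      exact Icc_subset_Icc le_rfl ht.2
    exact (hint.mono_set hsub).intervalIntegrable
  -- pointwise convergence of integrals
  have hptconv : ∀ t ∈ Icc a b,
      Tendsto (fun k => ∫ s in a..t, gs k s) atTop (nhds (∫ s in a..t, g s)) := by
    intro t ht
    rw [tendsto_iff_norm_sub_tendsto_zero]
    refine squeeze_zero (fun k => norm_nonneg _)
      (fun k => ?_) hL1r
    have hgint := hInt (gs k) (hgs k) t ht
    have hgint' := hInt g hg t ht
    rw [← intervalIntegral.integral_sub hgint hgint']
    have haesub : AEStronglyMeasurable (fun s => gs k s - g s) μ :=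
      ((hgs k).sub hg).aestronglyMeasurable
    calc ‖∫ s in a..t, (gs k s - g s)‖ ≤ ∫ s in a..t, ‖gs k s - g s‖ :=
          intervalIntegral.norm_integral_le_integral_norm ht.1
      _ = ∫ s in Ioc a t, ‖gs k s - g s‖ := by rw [intervalIntegral.integral_of_le ht.1]
      _ ≤ ∫ s in Icc a b, ‖gs k s - g s‖ := by
          refine setIntegral_mono_set ?_ ?_ ?_
          · have : Integrable (fun s => gs k s - g s) μ := ((hgs k).sub hg).integrable one_le_two
            rw [hμ] at this
            exact this.norm
          · exact Eventually.of_forall fun s => norm_nonneg _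
          · exact HasSubset.Subset.eventuallyLE fun s hsmem =>
              ⟨hsmem.1.le, hsmem.2.trans ht.2⟩
      _ = (eLpNorm (fun s => gs k s - g s) 1 μ).toReal := by
          rw [eLpNorm_one_eq_lintegral_enorm, ← integral_norm_eq_lintegral_enorm haesub, hμ]
  -- pointwise convergence of `hs k` to `h`
  have hhs : ∀ t ∈ Icc a b, Tendsto (fun k => hs k t) atTop (nhds (h t)) := by
    intro t ht
    have heq : (fun k => hs k t) = fun k => hs k a + ∫ s in a..t, gs k s :=
      funext fun k => hrep k t ht
    rw [heq, hhdef]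
    exact hconv_init.add (hptconv t ht)
  -- L² convergence of `F·xs k` to `F·x`
  have hFaesm : ∀ (u : ℝ → Fin n → ℝ), AEStronglyMeasurable u μ →
      AEStronglyMeasurable (fun t => F.mulVec (u t)) μ := by
    intro u hu
    have : AEStronglyMeasurable (fun t => Ψ F (u t)) μ :=
      (Ψ F).continuous.comp_aestronglyMeasurable hu
    simpa only [hΨ] using this
  have hFconv : Tendsto (fun k => eLpNorm
      ((fun t => F.mulVec (xs k t)) - fun t => F.mulVec (x t)) 2 μ) atTop (nhds 0) := by
    have hbd : ∀ k, eLpNorm ((fun t => F.mulVec (xs k t)) - fun t => F.mulVec (x t)) 2 μ ≤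
        ENNReal.ofReal ‖Ψ F‖ * eLpNorm (fun t => xs k t - x t) 2 μ := by
      intro k
      refine eLpNorm_le_mul_eLpNorm_of_ae_le_mul (Eventually.of_forall fun t => ?_) 2
      have : ((fun t => F.mulVec (xs k t)) - fun t => F.mulVec (x t)) t =
          Ψ F (xs k t - x t) := by
        simp only [Pi.sub_apply, hΨ]
        rw [← Matrix.mulVec_sub]
      rw [this]
      exact (Ψ F).le_opNorm _
    have hlim : Tendsto (fun k => ENNReal.ofReal ‖Ψ F‖ *
        eLpNorm (fun t => xs k t - x t) 2 μ) atTop (nhds 0) := by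
      have h2 : Tendsto (fun k => ENNReal.ofReal ‖Ψ F‖ * eLpNorm (fun t => xs k t - x t) 2 μ)
          atTop (nhds (ENNReal.ofReal ‖Ψ F‖ * 0)) :=
        ENNReal.Tendsto.const_mul hconv_x (Or.inr ENNReal.ofReal_ne_top)
      simpa using h2
    exact tendsto_of_tendsto_of_tendsto_of_le_of_le tendsto_const_nhds hlim
      (fun k => zero_le) hbd
  have hmeas : TendstoInMeasure μ (fun k t => F.mulVec (xs k t)) atTop
      (fun t => F.mulVec (x t)) :=
    tendstoInMeasure_of_tendsto_eLpNorm (by norm_num)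
      (fun k => hFaesm (xs k) (hxs k).aestronglyMeasurable)
      (hFaesm x hx.aestronglyMeasurable) hFconv
  obtain ⟨φ, hφmono, hφae⟩ := hmeas.exists_seq_tendsto_ae
  have haeall : ∀ᵐ t ∂μ, ∀ k, F.mulVec (xs k t) = hs k t := (ae_all_iff).2 hae
  refine ⟨h, g, hg, ?_, ?_, ?_, hha⟩
  · intro t ht
    rw [hha]
  · filter_upwards [hmem, hφae, haeall] with t ht htconv htae
    have h1 : Tendsto (fun j => hs (φ j) t) atTop (nhds (F.mulVec (x t))) := by
      have heq : (fun j => hs (φ j) t) = fun j => F.mulVec (xs (φ j) t) :=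
        funext fun j => (htae (φ j)).symm
      rw [heq]
      exact htconv
    have h2 : Tendsto (fun j => hs (φ j) t) atTop (nhds (h t)) :=
      (hhs t ht).comp hφmono.tendsto_atTop
    exact tendsto_nhds_unique h1 h2
  · exact Eventually.of_forall fun t => by simp [hgdef]
end

section
/- Integration by parts formula: Let F be an m×n real matrix, x ∈ L²([a,c];ℝⁿ) with F·x absolutely continuous and (F·x)' ∈ L², and z ∈ L²([a,c];ℝᵐ) with Fᵀ·z absolutely continuous and (Fᵀ·z)' ∈ L². Then ∫ₐᶜ [⟨(F·x)'(t), z(t)⟩ + ⟨(Fᵀ·z)'(t), x(t)⟩] dt = ⟨F·x(c), (Fᵀ)⁺ Fᵀ z(c)⟩ − ⟨F·x(a), (Fᵀ)⁺ Fᵀ z(a)⟩, where (Fᵀ)⁺ denotes the Moore–Penrose pseudoinverse of Fᵀ. -/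
open MeasureTheory Set Matrix Filter

lemma aux_ae_zero {k : ℕ} {a c : ℝ} (hac : a ≤ c) {f : ℝ → Fin k → ℝ}
    (hf : IntegrableOn f (Icc a c) volume)
    (h0 : ∀ t ∈ Icc a c, (∫ s in a..t, f s) = 0) :
    f =ᵐ[volume.restrict (Icc a c)] 0 := by
  set g : ℝ → Fin k → ℝ := (Icc a c).indicator f with hgdef
  have hgint : Integrable g volume := (integrable_indicator_iff measurableSet_Icc).2 hf
  have hball : ∀ w r : ℝ, 0 < r → (∫ y in Metric.closedBall w r, g y) = 0 := by
    intro w r hr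
    rw [Real.closedBall_eq_Icc, hgdef, setIntegral_indicator measurableSet_Icc, Icc_inter_Icc]
    rcases le_or_gt ((w - r) ⊔ a) ((w + r) ⊓ c) with hpq | hpq
    · have hpa : a ≤ (w - r) ⊔ a := le_sup_right
      have hqc : (w + r) ⊓ c ≤ c := inf_le_right
      have hp : (w - r) ⊔ a ∈ Icc a c := ⟨hpa, hpq.trans hqc⟩
      have hq : (w + r) ⊓ c ∈ Icc a c := ⟨hpa.trans hpq, hqc⟩
      have h1 : IntervalIntegrable f volume a ((w - r) ⊔ a) := by
        rw [intervalIntegrable_iff_integrableOn_Ioc_of_le hp.1]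
        exact hf.mono_set ((Ioc_subset_Icc_self).trans (Icc_subset_Icc le_rfl hp.2))
      have h2 : IntervalIntegrable f volume a ((w + r) ⊓ c) := by
        rw [intervalIntegrable_iff_integrableOn_Ioc_of_le hq.1]
        exact hf.mono_set ((Ioc_subset_Icc_self).trans (Icc_subset_Icc le_rfl hq.2))
      rw [integral_Icc_eq_integral_Ioc, ← intervalIntegral.integral_of_le hpq,
        ← intervalIntegral.integral_interval_sub_left h2 h1, h0 _ hq, h0 _ hp, sub_zero]
    · rw [Icc_eq_empty (not_le.2 hpq), setIntegral_empty]
  have hae : ∀ᵐ x ∂(volume : Measure ℝ), g x = 0 := by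
    filter_upwards [IsUnifLocDoublingMeasure.ae_tendsto_average (μ := (volume : Measure ℝ))
      hgint.locallyIntegrable 1] with x hx
    have hlim := hx (fun _ : ℝ => x) id tendsto_id
      (by filter_upwards [self_mem_nhdsWithin] with r hr
          simp only [Metric.mem_closedBall, dist_self, id]
          nlinarith [mem_Ioi.1 hr])
    have h0' : Tendsto (fun r : ℝ => ⨍ y in Metric.closedBall x r, g y) (nhdsWithin 0 (Ioi 0)) (nhds 0) := by
      apply Tendsto.congr' _ tendsto_const_nhds
      filter_upwards [self_mem_nhdsWithin] with r hr
      rw [setAverage_eq, hball x r hr, smul_zero]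
    exact (tendsto_nhds_unique h0' hlim).symm
  filter_upwards [ae_restrict_of_ae hae, ae_restrict_mem measurableSet_Icc] with t h1 h2
  simpa [hgdef, indicator_of_mem h2] using h1

lemma aux_eqOn {k : ℕ} {a c : ℝ} (hac : a < c) {f g : ℝ → Fin k → ℝ}
    (hf : ContinuousOn f (Icc a c)) (hg : ContinuousOn g (Icc a c))
    (h : f =ᵐ[volume.restrict (Icc a c)] g) : EqOn f g (Icc a c) := by
  intro t0 ht0
  by_contra hne
  have hcont : ContinuousOn (fun t => f t - g t) (Icc a c) := hf.sub hg
  have h0 : f t0 - g t0 ≠ 0 := sub_ne_zero.2 hne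
  have hev : (fun t => f t - g t) ⁻¹' ({0}ᶜ) ∈ nhdsWithin t0 (Icc a c) :=
    hcont t0 ht0 (isOpen_compl_singleton.mem_nhds h0)
  obtain ⟨U, hUopen, ht0U, hsub⟩ := mem_nhdsWithin.1 hev
  obtain ⟨ε, hε, hballU⟩ := Metric.isOpen_iff.1 hUopen t0 ht0U
  set p := a ⊔ (t0 - ε / 2) with hp
  set q := c ⊓ (t0 + ε / 2) with hq
  have hpq : p < q := by
    rw [hp, hq]
    apply max_lt <;> apply lt_min <;> [skip; skip; skip; skip] <;>
      first
        | linarith [ht0.1, ht0.2]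
  have hIoosub : Ioo p q ⊆ U ∩ Icc a c := by
    intro t ht
    have h1 : a ≤ p := le_sup_left
    have h2 : q ≤ c := inf_le_left
    have h3 : t0 - ε / 2 ≤ p := le_sup_right
    have h4 : q ≤ t0 + ε / 2 := inf_le_right
    refine ⟨hballU ?_, le_of_lt (lt_of_le_of_lt h1 ht.1), (ht.2.le).trans h2⟩
    rw [Metric.mem_ball, Real.dist_eq, abs_lt]
    constructor <;> nlinarith [ht.1, ht.2, hε]
  have hnull : volume.restrict (Icc a c) {t | ¬ f t = g t} = 0 := ae_iff.mp h
  have hle : volume.restrict (Icc a c) (Ioo p q) = 0 := by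
    apply measure_mono_null _ hnull
    intro t ht
    have hne' := hsub (hIoosub ht)
    simp only [mem_preimage, mem_compl_iff, mem_singleton_iff, sub_ne_zero] at hne'
    exact hne'
  rw [Measure.restrict_apply measurableSet_Ioo,
    inter_eq_self_of_subset_left ((hIoosub.trans inter_subset_right))] at hle
  simp [Real.volume_Ioo, hpq] at hle
  linarith

lemma aux_scalar {a c : ℝ} {φ ψ : ℝ → ℝ}
    (hφ : Integrable φ (volume.restrict (Ioc a c)))
    (hψ : Integrable ψ (volume.restrict (Ioc a c))) :
    Integrable (fun t => φ t * ∫ s in Ioc a t, ψ s) (volume.restrict (Ioc a c)) ∧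
    Integrable (fun t => (∫ s in Ioc a t, φ s) * ψ t) (volume.restrict (Ioc a c)) ∧
    (∫ t in Ioc a c, (φ t * (∫ s in Ioc a t, ψ s) + (∫ s in Ioc a t, φ s) * ψ t))
      = (∫ t in Ioc a c, φ t) * (∫ t in Ioc a c, ψ t) := by
  set ν := volume.restrict (Ioc a c) with hν
  set k : ℝ × ℝ → ℝ := fun p => φ p.1 * ψ p.2 with hk
  have hki : Integrable k (ν.prod ν) := hφ.mul_prod hψ
  set T : Set (ℝ × ℝ) := {p | p.2 ≤ p.1} with hTdef
  have hT : MeasurableSet T := measurableSet_le measurable_snd measurable_fst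
  set T' : Set (ℝ × ℝ) := {p | p.1 ≤ p.2} with hT'def
  have hT' : MeasurableSet T' := measurableSet_le measurable_fst measurable_snd
  have hkT : Integrable (T.indicator k) (ν.prod ν) := hki.indicator hT
  have hkT' : Integrable (T'.indicator k) (ν.prod ν) := hki.indicator hT'
  -- inner slice identities
  have hsliceT : ∀ t ∈ Ioc a c, (∫ s, T.indicator k (t, s) ∂ν) = φ t * ∫ s in Ioc a t, ψ s := by
    intro t ht
    have hfun : (fun s => T.indicator k (t, s)) = (Iic t).indicator (fun s => φ t * ψ s) := by
      funext s
      by_cases hs : s ≤ t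
      · rw [indicator_of_mem (by exact hs : (t, s) ∈ T), indicator_of_mem (by exact hs)]
      · rw [indicator_of_notMem (by exact hs : (t, s) ∉ T), indicator_of_notMem (by exact hs)]
    rw [hfun, integral_indicator measurableSet_Iic, hν, Measure.restrict_restrict measurableSet_Iic,
      Iic_inter_Ioc_of_le ht.2, integral_const_mul]
  have hsliceT' : ∀ s ∈ Ioc a c, (∫ t, T'.indicator k (t, s) ∂ν) = (∫ t in Ioc a s, φ t) * ψ s := by
    intro s hs
    have hfun : (fun t => T'.indicator k (t, s)) = (Iic s).indicator (fun t => φ t * ψ s) := by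
      funext t
      by_cases hts : t ≤ s
      · rw [indicator_of_mem (by exact hts : (t, s) ∈ T'), indicator_of_mem (by exact hts)]
      · rw [indicator_of_notMem (by exact hts : (t, s) ∉ T'), indicator_of_notMem (by exact hts)]
    rw [hfun, integral_indicator measurableSet_Iic, hν, Measure.restrict_restrict measurableSet_Iic,
      Iic_inter_Ioc_of_le hs.2, integral_mul_const]
  have hmem : ∀ᵐ t ∂ν, t ∈ Ioc a c := ae_restrict_mem measurableSet_Ioc
  have hIA : Integrable (fun t => φ t * ∫ s in Ioc a t, ψ s) ν := by
    refine hkT.integral_prod_left.congr ?_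
    filter_upwards [hmem] with t ht using hsliceT t ht
  have hIB : Integrable (fun t => (∫ s in Ioc a t, φ s) * ψ t) ν := by
    refine hkT'.integral_prod_right.congr ?_
    filter_upwards [hmem] with s hs using hsliceT' s hs
  refine ⟨hIA, hIB, ?_⟩
  have valA : (∫ p, T.indicator k p ∂(ν.prod ν)) = ∫ t in Ioc a c, (φ t * ∫ s in Ioc a t, ψ s) := by
    rw [integral_prod _ hkT]
    refine integral_congr_ae ?_
    filter_upwards [hmem] with t ht using hsliceT t ht
  have valB : (∫ p, T'.indicator k p ∂(ν.prod ν)) = ∫ t in Ioc a c, ((∫ s in Ioc a t, φ s) * ψ t) := by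
    rw [integral_prod_symm _ hkT']
    refine integral_congr_ae ?_
    filter_upwards [hmem] with s hs using hsliceT' s hs
  have hdiag : T ∩ T' = {p : ℝ × ℝ | p.1 = p.2} := by
    ext p
    simp only [hTdef, hT'def, mem_inter_iff, mem_setOf_eq]
    exact ⟨fun h => le_antisymm h.2 h.1, fun h => ⟨h.ge, h.le⟩⟩
  have hdiagnull : (ν.prod ν) (T ∩ T') = 0 := by
    rw [hdiag, Measure.prod_apply (measurableSet_eq_fun measurable_fst measurable_snd)]
    have : ∀ x : ℝ, ν (Prod.mk x ⁻¹' {p : ℝ × ℝ | p.1 = p.2}) = 0 := by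
      intro x
      have hpre : Prod.mk x ⁻¹' {p : ℝ × ℝ | p.1 = p.2} = {x} := by
        ext y; simp [eq_comm]
      rw [hpre]
      exact le_antisymm ((Measure.restrict_le_self) _ |>.trans_eq (Real.volume_singleton)) bot_le
    simp [this]
  have hzero : (∫ p, (T ∩ T').indicator k p ∂(ν.prod ν)) = 0 := by
    rw [integral_indicator (hT.inter hT'), Measure.restrict_eq_zero.2 hdiagnull,
      integral_zero_measure]
  have hsum : ∀ p : ℝ × ℝ, T.indicator k p + T'.indicator k p = k p + (T ∩ T').indicator k p := by
    intro p
    by_cases h1 : p ∈ T <;> by_cases h2 : p ∈ T'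
    · rw [indicator_of_mem h1, indicator_of_mem h2, indicator_of_mem (Set.mem_inter h1 h2)]
    · rw [indicator_of_mem h1, indicator_of_notMem h2,
        indicator_of_notMem (fun h => h2 h.2), add_zero]
    · rw [indicator_of_notMem h1, indicator_of_mem h2,
        indicator_of_notMem (fun h => h1 h.1), zero_add, add_zero]
    · exact absurd (le_total p.2 p.1) (by simp [hTdef, hT'def] at h1 h2 ⊢; exact ⟨h1, h2⟩)
  calc ∫ t in Ioc a c, (φ t * (∫ s in Ioc a t, ψ s) + (∫ s in Ioc a t, φ s) * ψ t)
      = (∫ t in Ioc a c, (φ t * ∫ s in Ioc a t, ψ s))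
        + ∫ t in Ioc a c, ((∫ s in Ioc a t, φ s) * ψ t) := integral_add hIA hIB
    _ = (∫ p, T.indicator k p ∂(ν.prod ν)) + (∫ p, T'.indicator k p ∂(ν.prod ν)) := by
        rw [valA, valB]
    _ = ∫ p, (T.indicator k p + T'.indicator k p) ∂(ν.prod ν) := (integral_add hkT hkT').symm
    _ = ∫ p, (k p + (T ∩ T').indicator k p) ∂(ν.prod ν) := by
        exact integral_congr_ae (Eventually.of_forall hsum)
    _ = (∫ p, k p ∂(ν.prod ν)) + ∫ p, (T ∩ T').indicator k p ∂(ν.prod ν) :=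
        integral_add hki (hki.indicator (hT.inter hT'))
    _ = ∫ p, k p ∂(ν.prod ν) := by rw [hzero, add_zero]
    _ = (∫ t in Ioc a c, φ t) * (∫ t in Ioc a c, ψ t) := integral_prod_mul φ ψ

lemma aux_scalar2 {a c : ℝ} {φ ψ : ℝ → ℝ}
    (hφ : Integrable φ (volume.restrict (Ioc a c)))
    (hψ : Integrable ψ (volume.restrict (Ioc a c))) (A B : ℝ) :
    Integrable (fun t => φ t * (B + ∫ s in Ioc a t, ψ s) + (A + ∫ s in Ioc a t, φ s) * ψ t)
      (volume.restrict (Ioc a c)) ∧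
    (∫ t in Ioc a c, (φ t * (B + ∫ s in Ioc a t, ψ s) + (A + ∫ s in Ioc a t, φ s) * ψ t))
      = (A + ∫ t in Ioc a c, φ t) * (B + ∫ t in Ioc a c, ψ t) - A * B := by
  obtain ⟨h1, h2, h3⟩ := aux_scalar hφ hψ
  have hint : Integrable
      (fun t => (φ t * B + φ t * (∫ s in Ioc a t, ψ s)) + (A * ψ t + (∫ s in Ioc a t, φ s) * ψ t))
      (volume.restrict (Ioc a c)) :=
    ((hφ.mul_const B).add h1).add ((hψ.const_mul A).add h2)
  have heq : (fun t => φ t * (B + ∫ s in Ioc a t, ψ s) + (A + ∫ s in Ioc a t, φ s) * ψ t)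
      = fun t => (φ t * B + φ t * (∫ s in Ioc a t, ψ s)) + (A * ψ t + (∫ s in Ioc a t, φ s) * ψ t) := by
    funext t; ring
  have hA : Integrable (fun t => φ t * B + φ t * ∫ s in Ioc a t, ψ s)
      (volume.restrict (Ioc a c)) := by exact (hφ.mul_const B).add h1
  have hB : Integrable (fun t => A * ψ t + (∫ s in Ioc a t, φ s) * ψ t)
      (volume.restrict (Ioc a c)) := by exact (hψ.const_mul A).add h2
  refine ⟨heq ▸ hint, ?_⟩
  rw [heq]
  rw [integral_add hA hB, integral_add (hφ.mul_const B) h1,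
    integral_add (hψ.const_mul A) h2, integral_mul_const, integral_const_mul]
  have h3' := (integral_add h1 h2).symm.trans h3
  linear_combination h3'

lemma aux_parts {k : ℕ} {a c : ℝ} (hac : a ≤ c) {f g : ℝ → Fin k → ℝ}
    (hf : IntegrableOn f (Icc a c) volume) (hg : IntegrableOn g (Icc a c) volume)
    {Fv Gv : ℝ → Fin k → ℝ}
    (hF : ∀ t ∈ Icc a c, Fv t = Fv a + ∫ s in a..t, f s)
    (hG : ∀ t ∈ Icc a c, Gv t = Gv a + ∫ s in a..t, g s) :
    (∫ t in a..c, (f t ⬝ᵥ Gv t + Fv t ⬝ᵥ g t)) = Fv c ⬝ᵥ Gv c - Fv a ⬝ᵥ Gv a := by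
  have hfI : IntegrableOn f (Ioc a c) volume := hf.mono_set Ioc_subset_Icc_self
  have hgI : IntegrableOn g (Ioc a c) volume := hg.mono_set Ioc_subset_Icc_self
  have hfi : ∀ i, Integrable (fun t => f t i) (volume.restrict (Ioc a c)) := fun i =>
    (ContinuousLinearMap.proj (R := ℝ) (φ := fun _ : Fin k => ℝ) i).integrable_comp hfI
  have hgi : ∀ i, Integrable (fun t => g t i) (volume.restrict (Ioc a c)) := fun i =>
    (ContinuousLinearMap.proj (R := ℝ) (φ := fun _ : Fin k => ℝ) i).integrable_comp hgI
  -- component representations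
  have hcompF : ∀ t ∈ Icc a c, ∀ i, Fv t i = Fv a i + ∫ s in Ioc a t, f s i := by
    intro t ht i
    have hii : IntervalIntegrable f volume a t := by
      rw [intervalIntegrable_iff_integrableOn_Ioc_of_le ht.1]
      exact hfI.mono_set (Ioc_subset_Ioc le_rfl ht.2)
    have h' := congrFun (hF t ht) i
    rw [h']
    simp only [Pi.add_apply]
    congr 1
    calc (∫ s in a..t, f s) i
        = (ContinuousLinearMap.proj (R := ℝ) (φ := fun _ : Fin k => ℝ) i) (∫ s in a..t, f s) := rfl
      _ = ∫ s in a..t, (ContinuousLinearMap.proj (R := ℝ) (φ := fun _ : Fin k => ℝ) i) (f s) :=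
          ((ContinuousLinearMap.proj (R := ℝ) (φ := fun _ : Fin k => ℝ)
            i).intervalIntegral_comp_comm hii).symm
      _ = ∫ s in Ioc a t, f s i := by rw [intervalIntegral.integral_of_le ht.1]; rfl
  have hcompG : ∀ t ∈ Icc a c, ∀ i, Gv t i = Gv a i + ∫ s in Ioc a t, g s i := by
    intro t ht i
    have hii : IntervalIntegrable g volume a t := by
      rw [intervalIntegrable_iff_integrableOn_Ioc_of_le ht.1]
      exact hgI.mono_set (Ioc_subset_Ioc le_rfl ht.2)
    have h' := congrFun (hG t ht) i
    rw [h']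
    simp only [Pi.add_apply]
    congr 1
    calc (∫ s in a..t, g s) i
        = (ContinuousLinearMap.proj (R := ℝ) (φ := fun _ : Fin k => ℝ) i) (∫ s in a..t, g s) := rfl
      _ = ∫ s in a..t, (ContinuousLinearMap.proj (R := ℝ) (φ := fun _ : Fin k => ℝ) i) (g s) :=
          ((ContinuousLinearMap.proj (R := ℝ) (φ := fun _ : Fin k => ℝ)
            i).intervalIntegral_comp_comm hii).symm
      _ = ∫ s in Ioc a t, g s i := by rw [intervalIntegral.integral_of_le ht.1]; rfl
  have key := fun i => aux_scalar2 (hfi i) (hgi i) (Fv a i) (Gv a i)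
  calc (∫ t in a..c, (f t ⬝ᵥ Gv t + Fv t ⬝ᵥ g t))
      = ∫ t in Ioc a c, (f t ⬝ᵥ Gv t + Fv t ⬝ᵥ g t) := intervalIntegral.integral_of_le hac
    _ = ∫ t in Ioc a c, (∑ i : Fin k, (f t i * (Gv a i + ∫ s in Ioc a t, g s i)
          + (Fv a i + ∫ s in Ioc a t, f s i) * g t i)) := by
        refine integral_congr_ae ?_
        filter_upwards [ae_restrict_mem measurableSet_Ioc] with t ht
        have ht' : t ∈ Icc a c := Ioc_subset_Icc_self ht
        simp only [dotProduct, ← Finset.sum_add_distrib]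
        refine Finset.sum_congr rfl fun i _ => ?_
        rw [← hcompF t ht' i, ← hcompG t ht' i]
    _ = ∑ i : Fin k, ∫ t in Ioc a c, (f t i * (Gv a i + ∫ s in Ioc a t, g s i)
          + (Fv a i + ∫ s in Ioc a t, f s i) * g t i) :=
        integral_finset_sum _ fun i _ => (key i).1
    _ = ∑ i : Fin k, ((Fv a i + ∫ t in Ioc a c, f t i) * (Gv a i + ∫ t in Ioc a c, g t i)
          - Fv a i * Gv a i) := by
        refine Finset.sum_congr rfl fun i _ => ?_
        exact (key i).2
    _ = Fv c ⬝ᵥ Gv c - Fv a ⬝ᵥ Gv a := by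
        simp only [dotProduct, ← Finset.sum_sub_distrib]
        refine Finset.sum_congr rfl fun i _ => ?_
        rw [hcompF c ⟨hac, le_rfl⟩ i, hcompG c ⟨hac, le_rfl⟩ i]

/-- Integration by parts: with `hx` the AC representative of `F·x` (derivative `gx ∈ L²`),
`hz` the AC representative of `Fᵀ·z` (derivative `gz ∈ L²`), and `P` the Moore–Penrose
pseudoinverse of `Fᵀ`, we have
`∫ₐᶜ (⟨(F·x)', z⟩ + ⟨(Fᵀ·z)', x⟩) = ⟨F·x(c), (Fᵀ)⁺Fᵀ z(c)⟩ − ⟨F·x(a), (Fᵀ)⁺Fᵀ z(a)⟩`. -/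
theorem integration_by_parts {m n : ℕ} (F : Matrix (Fin m) (Fin n) ℝ)
    (P : Matrix (Fin m) (Fin n) ℝ)
    (hP1 : Fᵀ * P * Fᵀ = Fᵀ) (hP2 : P * Fᵀ * P = P)
    (hP3 : (Fᵀ * P)ᵀ = Fᵀ * P) (hP4 : (P * Fᵀ)ᵀ = P * Fᵀ)
    (a c : ℝ) (hac : a < c)
    (μ : Measure ℝ) (hμ : μ = volume.restrict (Icc a c))
    (x : ℝ → Fin n → ℝ) (hx : MemLp x 2 μ)
    (hxr gx : ℝ → Fin m → ℝ) (hgx : MemLp gx 2 μ)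
    (hxrep : ∀ t ∈ Icc a c, hxr t = hxr a + ∫ s in a..t, gx s)
    (hxae : ∀ᵐ t ∂μ, F.mulVec (x t) = hxr t)
    (z : ℝ → Fin m → ℝ) (hz : MemLp z 2 μ)
    (hzr gz : ℝ → Fin n → ℝ) (hgz : MemLp gz 2 μ)
    (hzrep : ∀ t ∈ Icc a c, hzr t = hzr a + ∫ s in a..t, gz s)
    (hzae : ∀ᵐ t ∂μ, Fᵀ.mulVec (z t) = hzr t) :
    ∫ t in a..c, (gx t ⬝ᵥ z t + gz t ⬝ᵥ x t) =
      hxr c ⬝ᵥ P.mulVec (hzr c) - hxr a ⬝ᵥ P.mulVec (hzr a) := by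
  have hle : a ≤ c := hac.le
  subst hμ
  haveI : IsFiniteMeasure (volume.restrict (Icc a c)) := by
    refine ⟨?_⟩
    rw [Measure.restrict_apply_univ, Real.volume_Icc]
    exact ENNReal.ofReal_lt_top
  -- matrix algebra
  have hQF : P * Fᵀ * F = F := by
    have h1 : (P * Fᵀ * F)ᵀ = Fᵀ := by
      rw [Matrix.transpose_mul, hP4, ← Matrix.mul_assoc]
      exact hP1
    have := congrArg Matrix.transpose h1
    rwa [Matrix.transpose_transpose, Matrix.transpose_transpose] at this
  -- integrabilities
  have hgxI : IntegrableOn gx (Icc a c) volume := hgx.integrable (by norm_num)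
  have hgzI : IntegrableOn gz (Icc a c) volume := hgz.integrable (by norm_num)
  -- continuity of representatives
  have hxrCont : ContinuousOn hxr (Icc a c) := by
    refine ContinuousOn.congr ((continuousOn_const (c := hxr a)).add
      (intervalIntegral.continuousOn_primitive hgxI)) ?_
    intro t ht
    rw [hxrep t ht, intervalIntegral.integral_of_le ht.1]; rfl
  have hzrCont : ContinuousOn hzr (Icc a c) := by
    refine ContinuousOn.congr ((continuousOn_const (c := hzr a)).add
      (intervalIntegral.continuousOn_primitive hgzI)) ?_
    intro t ht
    rw [hzrep t ht, intervalIntegral.integral_of_le ht.1]; rfl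
  -- continuous linear maps
  let LQ : (Fin m → ℝ) →L[ℝ] (Fin m → ℝ) :=
    LinearMap.toContinuousLinearMap (Matrix.mulVecLin (P * Fᵀ))
  let LR : (Fin n → ℝ) →L[ℝ] (Fin n → ℝ) :=
    LinearMap.toContinuousLinearMap (Matrix.mulVecLin (Fᵀ * P))
  let LP : (Fin n → ℝ) →L[ℝ] (Fin m → ℝ) :=
    LinearMap.toContinuousLinearMap (Matrix.mulVecLin P)
  have hLQ : ∀ v, LQ v = (P * Fᵀ).mulVec v := fun v => rfl
  have hLR : ∀ v, LR v = (Fᵀ * P).mulVec v := fun v => rfl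
  have hLP : ∀ v, LP v = P.mulVec v := fun v => rfl
  -- projection fixes the representative, everywhere on Icc
  have hQxr : ∀ t ∈ Icc a c, (P * Fᵀ).mulVec (hxr t) = hxr t := by
    have hae : (fun t => (P * Fᵀ).mulVec (hxr t)) =ᵐ[volume.restrict (Icc a c)] hxr := by
      filter_upwards [hxae] with t ht
      rw [← ht, Matrix.mulVec_mulVec, hQF]
    exact aux_eqOn hac (LQ.continuous.comp_continuousOn hxrCont) hxrCont hae
  have hRzr : ∀ t ∈ Icc a c, (Fᵀ * P).mulVec (hzr t) = hzr t := by
    have hae : (fun t => (Fᵀ * P).mulVec (hzr t)) =ᵐ[volume.restrict (Icc a c)] hzr := by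
      filter_upwards [hzae] with t ht
      rw [← ht, Matrix.mulVec_mulVec, Matrix.mul_assoc, ← Matrix.mul_assoc, hP1]
    exact aux_eqOn hac (LR.continuous.comp_continuousOn hzrCont) hzrCont hae
  -- derivative stays in subspace
  have hQgx : (fun s => (P * Fᵀ).mulVec (gx s)) =ᵐ[volume.restrict (Icc a c)] gx := by
    have hdiff : (fun s => (P * Fᵀ).mulVec (gx s) - gx s) =ᵐ[volume.restrict (Icc a c)] 0 := by
      refine aux_ae_zero (f := fun s => (P * Fᵀ).mulVec (gx s) - gx s) hle
        (by exact (LQ.integrable_comp hgxI).sub hgxI) ?_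
      intro t ht
      have hii : IntervalIntegrable gx volume a t := by
        rw [intervalIntegrable_iff_integrableOn_Ioc_of_le ht.1]
        exact (hgxI.mono_set Ioc_subset_Icc_self).mono_set (Ioc_subset_Ioc le_rfl ht.2)
      have hQii : IntervalIntegrable (fun s => (P * Fᵀ).mulVec (gx s)) volume a t := by
        rw [intervalIntegrable_iff] at hii ⊢
        exact LQ.integrable_comp hii
      rw [intervalIntegral.integral_sub hQii hii]
      have hcomm : (∫ s in a..t, (P * Fᵀ).mulVec (gx s)) = LQ (∫ s in a..t, gx s) :=
        LQ.intervalIntegral_comp_comm hii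
      have hval : (∫ s in a..t, gx s) = hxr t - hxr a := by
        rw [hxrep t ht]; abel
      rw [hcomm, hval, map_sub, hLQ, hLQ, hQxr t ht, hQxr a ⟨le_rfl, hle⟩]
      abel
    filter_upwards [hdiff] with s hs
    have h0 : (P * Fᵀ).mulVec (gx s) - gx s = 0 := hs
    exact sub_eq_zero.1 h0
  have hRgz : (fun s => (Fᵀ * P).mulVec (gz s)) =ᵐ[volume.restrict (Icc a c)] gz := by
    have hdiff : (fun s => (Fᵀ * P).mulVec (gz s) - gz s) =ᵐ[volume.restrict (Icc a c)] 0 := by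
      refine aux_ae_zero (f := fun s => (Fᵀ * P).mulVec (gz s) - gz s) hle
        (by exact (LR.integrable_comp hgzI).sub hgzI) ?_
      intro t ht
      have hii : IntervalIntegrable gz volume a t := by
        rw [intervalIntegrable_iff_integrableOn_Ioc_of_le ht.1]
        exact (hgzI.mono_set Ioc_subset_Icc_self).mono_set (Ioc_subset_Ioc le_rfl ht.2)
      have hRii : IntervalIntegrable (fun s => (Fᵀ * P).mulVec (gz s)) volume a t := by
        rw [intervalIntegrable_iff] at hii ⊢
        exact LR.integrable_comp hii
      rw [intervalIntegral.integral_sub hRii hii]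
      have hcomm : (∫ s in a..t, (Fᵀ * P).mulVec (gz s)) = LR (∫ s in a..t, gz s) :=
        LR.intervalIntegral_comp_comm hii
      have hval : (∫ s in a..t, gz s) = hzr t - hzr a := by
        rw [hzrep t ht]; abel
      rw [hcomm, hval, map_sub, hLR, hLR, hRzr t ht, hRzr a ⟨le_rfl, hle⟩]
      abel
    filter_upwards [hdiff] with s hs
    have h0 : (Fᵀ * P).mulVec (gz s) - gz s = 0 := hs
    exact sub_eq_zero.1 h0
  -- apply integration by parts to hxr and P ∘ hzr
  have hPgzI : IntegrableOn (fun t => P.mulVec (gz t)) (Icc a c) volume := by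
    exact LP.integrable_comp hgzI
  have hGrep : ∀ t ∈ Icc a c,
      (fun t => P.mulVec (hzr t)) t = (fun t => P.mulVec (hzr t)) a
        + ∫ s in a..t, P.mulVec (gz s) := by
    intro t ht
    have hii : IntervalIntegrable gz volume a t := by
      rw [intervalIntegrable_iff_integrableOn_Ioc_of_le ht.1]
      exact (hgzI.mono_set Ioc_subset_Icc_self).mono_set (Ioc_subset_Ioc le_rfl ht.2)
    have hcomm : (∫ s in a..t, P.mulVec (gz s)) = LP (∫ s in a..t, gz s) :=
      LP.intervalIntegral_comp_comm hii
    simp only []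
    rw [hzrep t ht, Matrix.mulVec_add, hcomm, hLP]
  have hparts := aux_parts (Fv := hxr) (Gv := fun t => P.mulVec (hzr t)) hle hgxI hPgzI
    hxrep hGrep
  rw [← hparts, intervalIntegral.integral_of_le hle, intervalIntegral.integral_of_le hle]
  refine integral_congr_ae ?_
  have hsub : Ioc a c ⊆ Icc a c := Ioc_subset_Icc_self
  filter_upwards [ae_restrict_of_ae_restrict_of_subset hsub hxae,
    ae_restrict_of_ae_restrict_of_subset hsub hzae,
    ae_restrict_of_ae_restrict_of_subset hsub hQgx,
    ae_restrict_of_ae_restrict_of_subset hsub hRgz] with t h1 h2 h3 h4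
  have h3' : (P * Fᵀ).mulVec (gx t) = gx t := h3
  have h4' : (Fᵀ * P).mulVec (gz t) = gz t := h4
  have e1 : gx t ⬝ᵥ z t = gx t ⬝ᵥ P.mulVec (hzr t) := by
    conv_lhs => rw [← h3']
    rw [dotProduct_comm, dotProduct_mulVec, ← Matrix.mulVec_transpose, hP4,
      ← Matrix.mulVec_mulVec, h2, dotProduct_comm]
  have e2 : gz t ⬝ᵥ x t = hxr t ⬝ᵥ P.mulVec (gz t) := by
    conv_lhs => rw [← h4']
    rw [← Matrix.mulVec_mulVec, Matrix.mulVec_transpose, ← dotProduct_mulVec, h1,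
      dotProduct_comm]
  rw [e1, e2]
end

section
/- Let F = [[1,0],[0,0]] (a 2×2 real matrix) and consider the operator T : x ↦ F·(dx/dt) defined on the domain W₂ of absolutely continuous functions x : [0,1] → ℝ² with derivative in L². Then T is not a closed operator on L²([0,1];ℝ²): there exists a sequence xₙ in W₂ with xₙ → x in L² and T xₙ → 0 in L², but x ∉ W₂. -/
open MeasureTheory Set Filter

noncomputable section NotClosedFDerivAux

/-- Approximating "derivative": a tall thin bump of height `k+1` on `(1/2, 1/2 + 1/(k+1)]`. -/
def psiAux (k : ℕ) : ℝ → ℝ :=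
  (Ioc (2⁻¹ : ℝ) (2⁻¹ + ((k : ℝ) + 1)⁻¹)).indicator fun _ => (k : ℝ) + 1

/-- The vector `(0, 1)`. -/
def vAux : Fin 2 → ℝ := ![0, 1]

lemma vAux_one : vAux 1 = 1 := by simp [vAux]

lemma norm_vAux_le : ‖vAux‖ ≤ 1 := by
  rw [pi_norm_le_iff_of_nonneg zero_le_one]
  intro i
  fin_cases i <;> simp [vAux]

lemma norm_smul_vAux_le (c : ℝ) : ‖c • vAux‖ ≤ |c| := by
  rw [norm_smul, Real.norm_eq_abs]
  exact mul_le_of_le_one_right (abs_nonneg c) norm_vAux_le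

lemma psiAux_measurable (k : ℕ) : Measurable (psiAux k) :=
  measurable_const.indicator measurableSet_Ioc

lemma psiAux_abs_le (k : ℕ) (t : ℝ) : |psiAux k t| ≤ (k : ℝ) + 1 := by
  by_cases ht : t ∈ Ioc (2⁻¹ : ℝ) (2⁻¹ + ((k : ℝ) + 1)⁻¹)
  · rw [psiAux, indicator_of_mem ht]
    rw [abs_of_nonneg (by positivity)]
  · rw [psiAux, indicator_of_notMem ht]
    simp
    positivity

lemma psiAux_integral (k : ℕ) {t : ℝ} (ht : 0 ≤ t) :
    ∫ s in (0:ℝ)..t, psiAux k s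
      = ((k : ℝ) + 1) * max (min t (2⁻¹ + ((k : ℝ) + 1)⁻¹) - 2⁻¹) 0 := by
  rw [intervalIntegral.integral_of_le ht, psiAux,
    MeasureTheory.setIntegral_indicator measurableSet_Ioc,
    MeasureTheory.setIntegral_const, Ioc_inter_Ioc]
  have h0 : (0:ℝ) ⊔ 2⁻¹ = 2⁻¹ := sup_eq_right.mpr (by norm_num)
  rw [h0, measureReal_def, Real.volume_Ioc, ENNReal.toReal_ofReal', smul_eq_mul]
  ring

lemma psiAux_bound (k : ℕ) {t : ℝ} (ht : 0 ≤ t) :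
    |(∫ s in (0:ℝ)..t, psiAux k s) - (if (2⁻¹:ℝ) ≤ t then 1 else 0)| ≤
      (Icc (2⁻¹:ℝ) (2⁻¹ + ((k : ℝ) + 1)⁻¹)).indicator (fun _ => (1:ℝ)) t := by
  have hk : (0:ℝ) < (k : ℝ) + 1 := by positivity
  have hbk : (0:ℝ) < ((k : ℝ) + 1)⁻¹ := by positivity
  rw [psiAux_integral k ht]
  obtain ⟨b, hbdef⟩ : ∃ b : ℝ, b = 2⁻¹ + ((k : ℝ) + 1)⁻¹ := ⟨_, rfl⟩
  rw [← hbdef]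
  have hb : (2⁻¹ : ℝ) < b := by rw [hbdef]; linarith
  rcases lt_or_ge t 2⁻¹ with h1 | h1
  · have hmin : min t b = t := min_eq_left (h1.trans hb).le
    have hmax : max (t - 2⁻¹) 0 = 0 := max_eq_right (by linarith)
    rw [hmin, hmax, if_neg (not_le.mpr h1),
      indicator_of_notMem (by simp only [mem_Icc, not_and_or]; left; linarith)]
    simp
  · rw [if_pos h1]
    rcases le_or_gt t b with h2 | h2
    · rw [indicator_of_mem (Set.mem_Icc.mpr ⟨h1, h2⟩)]
      have hmin : min t b = t := min_eq_left h2
      have hmax : max (t - 2⁻¹) 0 = t - 2⁻¹ := max_eq_left (by linarith)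
      rw [hmin, hmax, abs_le]
      have hone : ((k : ℝ) + 1) * (b - 2⁻¹) = 1 := by
        rw [hbdef]; field_simp; ring
      have hnn : (0:ℝ) ≤ ((k : ℝ) + 1) * (t - 2⁻¹) :=
        mul_nonneg hk.le (by linarith)
      have hub : ((k : ℝ) + 1) * (t - 2⁻¹) ≤ 1 := by
        calc ((k : ℝ) + 1) * (t - 2⁻¹) ≤ ((k : ℝ) + 1) * (b - 2⁻¹) :=
              mul_le_mul_of_nonneg_left (by linarith) hk.le
          _ = 1 := hone
      constructor
      · linarith
      · linarith
    · rw [indicator_of_notMem (by simp only [mem_Icc, not_and_or]; right; linarith)]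
      have hmin : min t b = b := min_eq_right h2.le
      have hmax : max (b - 2⁻¹) 0 = b - 2⁻¹ := max_eq_left (by linarith)
      have hone : ((k : ℝ) + 1) * (b - 2⁻¹) = 1 := by
        rw [hbdef]; field_simp; ring
      rw [hmin, hmax, hone]
      simp

end NotClosedFDerivAux

/-- The mapping `x ↦ F · (dx/dt)` with `F = [[1,0],[0,0]]`, defined on absolutely continuous
functions on `[0,1]` with `L²` derivative, is not closed: there is a sequence `xs k` in the
domain with `xs k → x` in `L²` and `F · (xs k)' → 0` in `L²`, while `x` is not (a.e. equal to)
an absolutely continuous function with `L²` derivative. -/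
theorem not_closed_F_deriv
    (F : Matrix (Fin 2) (Fin 2) ℝ) (hF : F = !![1, 0; 0, 0])
    (μ : Measure ℝ) (hμ : μ = volume.restrict (Icc (0:ℝ) 1)) :
    ∃ (x : ℝ → Fin 2 → ℝ) (xs gs : ℕ → ℝ → Fin 2 → ℝ),
      MemLp x 2 μ ∧
      (∀ k, MemLp (gs k) 2 μ ∧
        ∀ t ∈ Icc (0:ℝ) 1, xs k t = xs k 0 + ∫ s in (0:ℝ)..t, gs k s) ∧
      Tendsto (fun k => eLpNorm (fun t => xs k t - x t) 2 μ) atTop (nhds 0) ∧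
      Tendsto (fun k => eLpNorm (fun t => F.mulVec (gs k t)) 2 μ) atTop (nhds 0) ∧
      ¬ ∃ (h g : ℝ → Fin 2 → ℝ), MemLp g 2 μ ∧
          (∀ t ∈ Icc (0:ℝ) 1, h t = h 0 + ∫ s in (0:ℝ)..t, g s) ∧
          (∀ᵐ t ∂μ, x t = h t) := by
  subst hF hμ
  haveI : IsFiniteMeasure (volume.restrict (Icc (0:ℝ) 1)) := by
    constructor
    rw [Measure.restrict_apply_univ, Real.volume_Icc]
    exact ENNReal.ofReal_lt_top
  set x : ℝ → Fin 2 → ℝ := fun t => (if (2⁻¹:ℝ) ≤ t then (1:ℝ) else 0) • vAux with hxdef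
  set xs : ℕ → ℝ → Fin 2 → ℝ :=
    fun k t => (∫ s in (0:ℝ)..t, psiAux k s) • vAux with hxsdef
  set gs : ℕ → ℝ → Fin 2 → ℝ := fun k t => psiAux k t • vAux with hgsdef
  have hindmeas : Measurable fun t : ℝ => if (2⁻¹:ℝ) ≤ t then (1:ℝ) else 0 :=
    Measurable.ite measurableSet_Ici measurable_const measurable_const
  refine ⟨x, xs, gs, ?_, ?_, ?_, ?_, ?_⟩
  · -- MemLp x
    refine MemLp.of_bound ((hindmeas.smul_const vAux).aestronglyMeasurable) 1 ?_
    refine ae_of_all _ fun t => ?_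
    refine (norm_smul_vAux_le _).trans ?_
    by_cases ht : (2⁻¹:ℝ) ≤ t <;> simp [ht]
  · -- domain membership
    intro k
    constructor
    · refine MemLp.of_bound (((psiAux_measurable k).smul_const vAux).aestronglyMeasurable)
        ((k : ℝ) + 1) ?_
      exact ae_of_all _ fun t => (norm_smul_vAux_le _).trans (psiAux_abs_le k t)
    · intro t ht
      have : (∫ s in (0:ℝ)..t, gs k s) = (∫ s in (0:ℝ)..t, psiAux k s) • vAux :=
        intervalIntegral.integral_smul_const _ _
      rw [this]
      simp [hxsdef, intervalIntegral.integral_same]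
  · -- xs → x in L²
    have hle : ∀ k, eLpNorm (fun t => xs k t - x t) 2 (volume.restrict (Icc (0:ℝ) 1))
        ≤ (ENNReal.ofReal (((k : ℝ) + 1)⁻¹)) ^ ((1:ℝ)/2) := by
      intro k
      have hmono : eLpNorm (fun t => xs k t - x t) 2 (volume.restrict (Icc (0:ℝ) 1))
          ≤ eLpNorm ((Icc (2⁻¹:ℝ) (2⁻¹ + ((k : ℝ) + 1)⁻¹)).indicator (fun _ => (1:ℝ))) 2
            (volume.restrict (Icc (0:ℝ) 1)) := by
        refine eLpNorm_mono_ae ?_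
        filter_upwards [ae_restrict_mem measurableSet_Icc] with t htmem
        have h1 : xs k t - x t
            = ((∫ s in (0:ℝ)..t, psiAux k s) - (if (2⁻¹:ℝ) ≤ t then 1 else 0)) • vAux := by
          rw [hxsdef, hxdef, sub_smul]
        rw [h1]
        refine (norm_smul_vAux_le _).trans ((psiAux_bound k htmem.1).trans ?_)
        rw [Real.norm_eq_abs]
        exact le_abs_self _
      refine hmono.trans ?_
      refine (eLpNorm_mono_measure _ Measure.restrict_le_self).trans ?_
      rw [eLpNorm_indicator_const measurableSet_Icc two_ne_zero ENNReal.ofNat_ne_top]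
      have : volume (Icc (2⁻¹:ℝ) (2⁻¹ + ((k : ℝ) + 1)⁻¹))
          = ENNReal.ofReal (((k : ℝ) + 1)⁻¹) := by
        rw [Real.volume_Icc]; ring_nf
      rw [this]
      simp
  -- also need toReal 2 = 2
    have hupper : Tendsto (fun k : ℕ => (ENNReal.ofReal (((k : ℝ) + 1)⁻¹)) ^ ((1:ℝ)/2))
        atTop (nhds 0) := by
      have h1 : Tendsto (fun k : ℕ => ((k : ℝ) + 1)⁻¹) atTop (nhds 0) := by
        exact tendsto_one_div_add_atTop_nhds_zero_nat.congr fun n => one_div _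
      have h2 : Tendsto (fun k : ℕ => (((k : ℝ) + 1)⁻¹) ^ ((1:ℝ)/2)) atTop (nhds 0) := by
        have hc := (Real.continuousAt_rpow_const 0 ((1:ℝ)/2) (Or.inr (by norm_num))).tendsto
        have := hc.comp h1
        simpa [Real.zero_rpow (by norm_num : (1:ℝ)/2 ≠ 0), Function.comp_def] using this
      have h3 : Tendsto (fun k : ℕ => ENNReal.ofReal ((((k : ℝ) + 1)⁻¹) ^ ((1:ℝ)/2)))
          atTop (nhds 0) := by
        simpa using ENNReal.tendsto_ofReal h2
      refine h3.congr fun k => ?_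
      rw [ENNReal.ofReal_rpow_of_nonneg (by positivity) (by norm_num)]
    exact tendsto_of_tendsto_of_tendsto_of_le_of_le tendsto_const_nhds hupper
      (fun k => zero_le) hle
  · -- F ∘ gs → 0
    have hzero : ∀ k, (fun t => Matrix.mulVec !![1, 0; 0, 0] (gs k t)) = fun _ => (0 : Fin 2 → ℝ) := by
      intro k
      funext t i
      fin_cases i <;>
        simp [hgsdef, vAux, Matrix.mulVec, dotProduct, Fin.sum_univ_two]
    refine tendsto_const_nhds.congr fun k => ?_
    rw [hzero k, eLpNorm_zero']
  · -- x is not a.e. an absolutely continuous function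
    rintro ⟨h, g, hgmem, hrep, hae⟩
    set g2 : ℝ → ℝ := fun t => g t 1 with hg2def
    set h2 : ℝ → ℝ := fun t => h t 1 with hh2def
    have hproj : MemLp g2 2 (volume.restrict (Icc (0:ℝ) 1)) :=
      (ContinuousLinearMap.proj (R := ℝ) (φ := fun _ : Fin 2 => ℝ) 1).comp_memLp' hgmem
    have hg2int : IntegrableOn g2 (Icc (0:ℝ) 1) volume :=
      hproj.integrable one_le_two
    have hgint : IntegrableOn g (Icc (0:ℝ) 1) volume :=
      hgmem.integrable one_le_two
    have hgii : ∀ t ∈ Icc (0:ℝ) 1, IntervalIntegrable g volume 0 t := by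
      intro t ht
      rw [intervalIntegrable_iff, uIoc_of_le ht.1]
      exact hgint.mono_set (fun s hs => ⟨hs.1.le, hs.2.trans ht.2⟩)
    have hcomp : ∀ t ∈ Icc (0:ℝ) 1, h2 t = h2 0 + ∫ s in (0:ℝ)..t, g2 s := by
      intro t ht
      have heq := congrFun (hrep t ht) 1
      rw [Pi.add_apply] at heq
      have hint : (∫ s in (0:ℝ)..t, g s) 1 = ∫ s in (0:ℝ)..t, g2 s := by
        have := (ContinuousLinearMap.proj (R := ℝ) (φ := fun _ : Fin 2 => ℝ) 1
          ).intervalIntegral_comp_comm (hgii t ht)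
        exact this.symm
      rw [hint] at heq
      exact heq
    have hcont : ContinuousOn h2 (Icc (0:ℝ) 1) := by
      have hprim : ContinuousOn (fun t => h2 0 + ∫ s in (0:ℝ)..t, g2 s) (Icc (0:ℝ) 1) := by
        refine continuousOn_const.add ?_
        have hint : IntegrableOn g2 (uIcc (0:ℝ) 1) volume := by
          rw [uIcc_of_le zero_le_one]; exact hg2int
        have := intervalIntegral.continuousOn_primitive_interval hint
        rwa [uIcc_of_le zero_le_one] at this
      exact hprim.congr hcomp
    have hae2 : (fun t => if (2⁻¹:ℝ) ≤ t then (1:ℝ) else 0)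
        =ᵐ[volume.restrict (Icc (0:ℝ) 1)] h2 := by
      filter_upwards [hae] with t ht
      have h1 := congrFun ht 1
      by_cases hc : (2⁻¹:ℝ) ≤ t <;>
        simpa [hxdef, hc, vAux_one] using h1
    -- left part: h2 = 0 on [0, 1/2]
    have hL : h2 =ᵐ[volume.restrict (Icc (0:ℝ) 2⁻¹)] fun _ => (0:ℝ) := by
      have hmono : volume.restrict (Icc (0:ℝ) 2⁻¹) ≤ volume.restrict (Icc (0:ℝ) 1) :=
        Measure.restrict_mono (Icc_subset_Icc le_rfl (by norm_num)) le_rfl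
      have hae2' : (fun t => if (2⁻¹:ℝ) ≤ t then (1:ℝ) else 0)
          =ᵐ[volume.restrict (Icc (0:ℝ) 2⁻¹)] h2 := hae2.filter_mono (ae_mono hmono)
      have hne : ∀ᵐ t ∂(volume.restrict (Icc (0:ℝ) 2⁻¹)), t ≠ 2⁻¹ := by
        refine ae_restrict_of_ae ?_
        rw [ae_iff]
        refine measure_mono_null (fun s hs => ?_) (measure_singleton (2⁻¹:ℝ))
        simpa using hs
      filter_upwards [hae2', hne, ae_restrict_mem measurableSet_Icc] with t hteq htne htmem
      have hlt : t < 2⁻¹ := lt_of_le_of_ne htmem.2 htne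
      rw [← hteq, if_neg (not_le.mpr hlt)]
    have hLeq : EqOn h2 (fun _ => (0:ℝ)) (Icc (0:ℝ) 2⁻¹) :=
      Measure.eqOn_Icc_of_ae_eq volume (by norm_num) hL
        (hcont.mono (Icc_subset_Icc le_rfl (by norm_num))) continuousOn_const
    -- right part: h2 = 1 on [1/2, 1]
    have hR : h2 =ᵐ[volume.restrict (Icc (2⁻¹:ℝ) 1)] fun _ => (1:ℝ) := by
      have hmono : volume.restrict (Icc (2⁻¹:ℝ) 1) ≤ volume.restrict (Icc (0:ℝ) 1) :=
        Measure.restrict_mono (Icc_subset_Icc (by norm_num) le_rfl) le_rfl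
      have hae2' : (fun t => if (2⁻¹:ℝ) ≤ t then (1:ℝ) else 0)
          =ᵐ[volume.restrict (Icc (2⁻¹:ℝ) 1)] h2 := hae2.filter_mono (ae_mono hmono)
      filter_upwards [hae2', ae_restrict_mem measurableSet_Icc] with t hteq htmem
      rw [← hteq, if_pos htmem.1]
    have hReq : EqOn h2 (fun _ => (1:ℝ)) (Icc (2⁻¹:ℝ) 1) :=
      Measure.eqOn_Icc_of_ae_eq volume (by norm_num) hR
        (hcont.mono (Icc_subset_Icc (by norm_num) le_rfl)) continuousOn_const
    have h0 : h2 2⁻¹ = 0 := hLeq ⟨by norm_num, le_rfl⟩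
    have h1 : h2 2⁻¹ = 1 := hReq ⟨le_rfl, by norm_num⟩
    rw [h0] at h1
    norm_num at h1
end

section
/- Let C₄ be a real matrix and for ε ∈ (0,1) set Q(ε) = (ε²E + C₄ᵀC₄)⁻¹, where E is the identity. Then ε²E + C₄ᵀC₄ is invertible for every ε > 0, and for any matrix C₂ᵀ of compatible dimensions, the family ε ↦ Q(ε) C₂ᵀ is uniformly bounded in norm for ε ∈ (0,1) if and only if the column space of C₂ᵀ is contained in the column space of C₄ᵀC₄ (equivalently, the row space of C₂ is contained in the row space of C₄). -/
open Set Matrix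

private lemma Qaux_posDef {p q : ℕ} (C₄ : Matrix (Fin p) (Fin q) ℝ) (ε : ℝ) (hε : 0 < ε) :
    (ε ^ 2 • (1 : Matrix (Fin q) (Fin q) ℝ) + C₄ᵀ * C₄).PosDef := by
  apply Matrix.PosDef.add_posSemidef
  · refine Matrix.PosDef.of_dotProduct_mulVec_pos (by simp [Matrix.IsHermitian]) fun x hx => ?_
    have hxx : 0 < x ⬝ᵥ x :=
      lt_of_le_of_ne (Finset.sum_nonneg fun i _ => mul_self_nonneg _)
        (Ne.symm ((dotProduct_self_eq_zero (v := x)).not.2 hx))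
    simpa [smul_mulVec, dotProduct_smul] using mul_pos (pow_pos hε 2) hxx
  · have := Matrix.posSemidef_conjTranspose_mul_self C₄
    simpa using this

private lemma Qaux_entry_bound {p q : ℕ} (C₄ : Matrix (Fin p) (Fin q) ℝ) (ε : ℝ) (hε : 0 < ε)
    (i k : Fin q) (y : Fin q → ℝ)
    (hMy : (ε ^ 2 • (1 : Matrix (Fin q) (Fin q) ℝ) + C₄ᵀ * C₄) *ᵥ y = Pi.single k 1) :
    |ε ^ 2 * y i| ≤ 1 := by
  set sσ := y ⬝ᵥ y with hs
  have hs0 : 0 ≤ sσ := Finset.sum_nonneg fun j _ => mul_self_nonneg _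
  have hquad : ε ^ 2 * sσ ≤ y k := by
    have h1 : y ⬝ᵥ ((ε ^ 2 • (1 : Matrix (Fin q) (Fin q) ℝ) + C₄ᵀ * C₄) *ᵥ y)
        = ε ^ 2 * sσ + (C₄ *ᵥ y) ⬝ᵥ (C₄ *ᵥ y) := by
      rw [Matrix.add_mulVec, dotProduct_add, smul_mulVec, Matrix.one_mulVec,
        dotProduct_smul, ← Matrix.mulVec_mulVec, Matrix.dotProduct_mulVec,
        Matrix.vecMul_transpose]
      simp [hs, smul_eq_mul]
    have h2 : 0 ≤ (C₄ *ᵥ y) ⬝ᵥ (C₄ *ᵥ y) := Finset.sum_nonneg fun j _ => mul_self_nonneg _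
    have h3 : y ⬝ᵥ ((ε ^ 2 • (1 : Matrix (Fin q) (Fin q) ℝ) + C₄ᵀ * C₄) *ᵥ y) = y k := by
      rw [hMy]; simp
    linarith
  have hk2 : y k * y k ≤ sσ := hs ▸ Finset.single_le_sum
      (f := fun j => y j * y j) (fun j _ => mul_self_nonneg _) (Finset.mem_univ k)
  have hi2 : y i * y i ≤ sσ := hs ▸ Finset.single_le_sum
      (f := fun j => y j * y j) (fun j _ => mul_self_nonneg _) (Finset.mem_univ i)
  have hyk0 : 0 ≤ y k := le_trans (by positivity) hquad
  have h4 : (ε ^ 2 * sσ) * (ε ^ 2 * sσ) ≤ y k * y k :=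
    mul_le_mul hquad hquad (by positivity) hyk0
  have he4 : ε ^ 2 * (ε ^ 2 * sσ) ≤ 1 := by
    rcases hs0.eq_or_lt with h0 | h0
    · rw [← h0]; norm_num
    · nlinarith [h4, h0, mul_pos h0 h0]
  have h6 : ε ^ 2 * y i * (ε ^ 2 * y i) ≤ ε ^ 2 * ε ^ 2 * sσ := by
    have := mul_le_mul_of_nonneg_left hi2 (by positivity : (0:ℝ) ≤ ε ^ 2 * ε ^ 2)
    nlinarith []
  rw [abs_le_one_iff_mul_self_le_one]
  nlinarith [he4]

/-- `ε²E + C₄ᵀC₄` is invertible for all `ε > 0`, and the family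
`Q(ε)C₂ᵀ = (ε²E + C₄ᵀC₄)⁻¹ C₂ᵀ` is uniformly bounded (entrywise) for `ε ∈ (0,1)` iff the
column space of `C₂ᵀ` is contained in the column space of `C₄ᵀC₄`. -/
theorem Q_eps_uniformly_bounded_iff {p q s : ℕ}
    (C₄ : Matrix (Fin p) (Fin q) ℝ) (C₂ : Matrix (Fin s) (Fin q) ℝ)
    (Q : ℝ → Matrix (Fin q) (Fin q) ℝ)
    (hQ : ∀ ε : ℝ, Q ε = (ε ^ 2 • (1 : Matrix (Fin q) (Fin q) ℝ) + C₄ᵀ * C₄)⁻¹) :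
    (∀ ε : ℝ, 0 < ε →
        IsUnit (ε ^ 2 • (1 : Matrix (Fin q) (Fin q) ℝ) + C₄ᵀ * C₄).det) ∧
    ((∃ M : ℝ, ∀ ε ∈ Ioo (0:ℝ) 1, ∀ i j, |(Q ε * C₂ᵀ) i j| ≤ M) ↔
      ∃ X : Matrix (Fin q) (Fin s) ℝ, C₂ᵀ = (C₄ᵀ * C₄) * X) := by
  have hsymA : (C₄ᵀ * C₄)ᵀ = C₄ᵀ * C₄ := by
    rw [Matrix.transpose_mul, Matrix.transpose_transpose]
  have hdet : ∀ ε : ℝ, 0 < ε →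
      IsUnit (ε ^ 2 • (1 : Matrix (Fin q) (Fin q) ℝ) + C₄ᵀ * C₄).det :=
    fun ε hε => ((Qaux_posDef C₄ ε hε).det_pos).ne'.isUnit
  have hMsym : ∀ ε : ℝ,
      (ε ^ 2 • (1 : Matrix (Fin q) (Fin q) ℝ) + C₄ᵀ * C₄)ᵀ
        = ε ^ 2 • (1 : Matrix (Fin q) (Fin q) ℝ) + C₄ᵀ * C₄ := by
    intro ε
    rw [Matrix.transpose_add, Matrix.transpose_smul, Matrix.transpose_one, hsymA]
  refine ⟨hdet, ?_, ?_⟩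
  · -- bounded → ∃ X
    rintro ⟨M, hM⟩
    -- Step 1 : vectors in the kernel annihilate C₂ᵀ from the left
    have step1 : ∀ v : Fin q → ℝ, (C₄ᵀ * C₄) *ᵥ v = 0 → v ᵥ* C₂ᵀ = 0 := by
      intro v hv
      funext j
      set K := ∑ i, |v i| * M with hK
      have hbound : ∀ ε ∈ Ioo (0:ℝ) 1, |(v ᵥ* C₂ᵀ) j| ≤ ε ^ 2 * |K| := by
        intro ε hε
        have hd := hdet ε hε.1
        have hQl : Q ε * (ε ^ 2 • (1 : Matrix (Fin q) (Fin q) ℝ) + C₄ᵀ * C₄) = 1 := by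
          rw [hQ]; exact Matrix.nonsing_inv_mul _ hd
        have hQsym : (Q ε)ᵀ = Q ε := by
          rw [hQ, Matrix.transpose_nonsing_inv, hMsym]
        have hMv : (ε ^ 2 • (1 : Matrix (Fin q) (Fin q) ℝ) + C₄ᵀ * C₄) *ᵥ v = ε ^ 2 • v := by
          rw [Matrix.add_mulVec, hv, add_zero, smul_mulVec, Matrix.one_mulVec]
        have hQv : Q ε *ᵥ v = (ε ^ 2)⁻¹ • v := by
          have h1 : Q ε *ᵥ ((ε ^ 2 • (1 : Matrix (Fin q) (Fin q) ℝ) + C₄ᵀ * C₄) *ᵥ v) = v := by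
            rw [Matrix.mulVec_mulVec, hQl, Matrix.one_mulVec]
          rw [hMv, Matrix.mulVec_smul] at h1
          have hε2 : (ε:ℝ) ^ 2 ≠ 0 := ne_of_gt (pow_pos hε.1 2)
          calc Q ε *ᵥ v = (ε ^ 2)⁻¹ • (ε ^ 2 • (Q ε *ᵥ v)) := by
                rw [smul_smul, inv_mul_cancel₀ hε2, one_smul]
          _ = (ε ^ 2)⁻¹ • v := by rw [h1]
        have hvQ : v ᵥ* Q ε = (ε ^ 2)⁻¹ • v := by
          rw [← hQsym, Matrix.vecMul_transpose, hQv]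
        have hkey : (ε ^ 2)⁻¹ * (v ᵥ* C₂ᵀ) j = (v ᵥ* (Q ε * C₂ᵀ)) j := by
          rw [← Matrix.vecMul_vecMul, hvQ]
          simp [Matrix.vecMul, dotProduct, Finset.mul_sum, mul_assoc]
        have habs : |(v ᵥ* (Q ε * C₂ᵀ)) j| ≤ K := by
          rw [hK]
          calc |(v ᵥ* (Q ε * C₂ᵀ)) j| = |∑ i, v i * (Q ε * C₂ᵀ) i j| := by
                rw [Matrix.vecMul]; simp [dotProduct]
          _ ≤ ∑ i, |v i * (Q ε * C₂ᵀ) i j| := Finset.abs_sum_le_sum_abs _ _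
          _ ≤ ∑ i, |v i| * M := by
                refine Finset.sum_le_sum fun i _ => ?_
                rw [abs_mul]
                exact mul_le_mul_of_nonneg_left (hM ε hε i j) (abs_nonneg _)
        have hε2 : (0:ℝ) < ε ^ 2 := pow_pos hε.1 2
        have : |(v ᵥ* C₂ᵀ) j| = ε ^ 2 * |(v ᵥ* (Q ε * C₂ᵀ)) j| := by
          rw [← hkey, abs_mul, abs_of_pos (inv_pos.2 hε2), ← mul_assoc,
            mul_inv_cancel₀ (ne_of_gt hε2), one_mul]
        rw [this]
        exact mul_le_mul_of_nonneg_left (le_trans habs (le_abs_self K)) (le_of_lt hε2)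
      -- deduce the value is 0
      by_contra hne
      have hc : 0 < |(v ᵥ* C₂ᵀ) j| := abs_pos.2 hne
      set c := |(v ᵥ* C₂ᵀ) j| with hcdef
      set ε₀ := min (1/2) (c / (|K| + 1)) with hε₀
      have hK1 : 0 < |K| + 1 := by positivity
      have hε₀pos : 0 < ε₀ := lt_min (by norm_num) (div_pos hc hK1)
      have hε₀lt : ε₀ < 1 := lt_of_le_of_lt (min_le_left _ _) (by norm_num)
      have hb := hbound ε₀ ⟨hε₀pos, hε₀lt⟩
      have h1 : ε₀ ≤ c / (|K| + 1) := min_le_right _ _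
      have h2 : ε₀ ^ 2 * |K| < c := by
        have hε₀le1 : ε₀ ≤ 1 := le_of_lt hε₀lt
        have : ε₀ ^ 2 * |K| ≤ ε₀ * |K| := by nlinarith [abs_nonneg K]
        have h3 : ε₀ * |K| ≤ (c / (|K| + 1)) * |K| :=
          mul_le_mul_of_nonneg_right h1 (abs_nonneg K)
        have h4 : (c / (|K| + 1)) * |K| < c := by
          rw [div_mul_eq_mul_div, div_lt_iff₀ hK1]
          nlinarith [abs_nonneg K]
        linarith
      linarith
    -- Step 2 : each column of C₂ᵀ lies in the range of (C₄ᵀC₄) *ᵥ ·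
    have hrange : ∀ j : Fin s, ∃ x : Fin q → ℝ,
        (C₄ᵀ * C₄) *ᵥ x = fun i => C₂ᵀ i j := by
      intro j
      set T := (C₄ᵀ * C₄).mulVecLin with hT
      have hsymdot : ∀ u w : Fin q → ℝ, ((C₄ᵀ * C₄) *ᵥ u) ⬝ᵥ w = u ⬝ᵥ ((C₄ᵀ * C₄) *ᵥ w) := by
        intro u w
        have h := Matrix.vecMul_transpose (A := C₄ᵀ * C₄) u
        rw [hsymA] at h
        rw [Matrix.dotProduct_mulVec, h]
      have hdisj : Disjoint (LinearMap.range T) (LinearMap.ker T) := by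
        rw [Submodule.disjoint_def]
        rintro x hxr hxk
        obtain ⟨u, hu⟩ := hxr
        have hu' : (C₄ᵀ * C₄) *ᵥ u = x := hu
        have hxk' : (C₄ᵀ * C₄) *ᵥ x = 0 := hxk
        have : x ⬝ᵥ x = 0 := by
          rw [← hu', hsymdot, hu', hxk', dotProduct_zero]
        exact dotProduct_self_eq_zero.1 this
      have hsup : LinearMap.range T ⊔ LinearMap.ker T = ⊤ := by
        apply Submodule.eq_top_of_finrank_eq
        have h1 := LinearMap.finrank_range_add_finrank_ker T
        have h2 := Submodule.finrank_sup_add_finrank_inf_eq (LinearMap.range T)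
          (LinearMap.ker T)
        rw [hdisj.eq_bot, finrank_bot, add_zero] at h2
        rw [h2, h1]
      have hmem : (fun i => C₂ᵀ i j) ∈ LinearMap.range T ⊔ LinearMap.ker T := by
        rw [hsup]; trivial
      obtain ⟨x, hxmem, k, hkmem, hxk⟩ := Submodule.mem_sup.1 hmem
      obtain ⟨u, hu⟩ := hxmem
      have hkker : (C₄ᵀ * C₄) *ᵥ k = 0 := hkmem
      have hkc : k ⬝ᵥ (fun i => C₂ᵀ i j) = 0 := by
        have := step1 k hkker
        have h := congr_fun this j
        simpa [Matrix.vecMul, dotProduct] using h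
      have hkx : k ⬝ᵥ x = 0 := by
        rw [← hu]
        show k ⬝ᵥ ((C₄ᵀ * C₄) *ᵥ u) = 0
        rw [← hsymdot, hkker, zero_dotProduct]
      have hkk : k ⬝ᵥ k = 0 := by
        have h : k ⬝ᵥ (x + k) = k ⬝ᵥ (fun i => C₂ᵀ i j) := by rw [hxk]
        rwa [dotProduct_add, hkx, zero_add, hkc] at h
      have hk0 : k = 0 := dotProduct_self_eq_zero.1 hkk
      refine ⟨u, ?_⟩
      have : T u = x := hu
      rw [hk0, add_zero] at hxk
      rw [← hxk]
      exact this
    choose x hx using hrange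
    refine ⟨Matrix.of fun i j => x j i, ?_⟩
    ext i j
    rw [Matrix.mul_apply, ← congr_fun (hx j) i]
    simp only [Matrix.mulVec, dotProduct, Matrix.of_apply]
  · -- ∃ X → bounded
    rintro ⟨X, hX⟩
    set S := ∑ i, ∑ j, |X i j| with hS
    refine ⟨S + S, fun ε hε i j => ?_⟩
    have hd := hdet ε hε.1
    have hQr : (ε ^ 2 • (1 : Matrix (Fin q) (Fin q) ℝ) + C₄ᵀ * C₄) * Q ε = 1 := by
      rw [hQ]; exact Matrix.mul_nonsing_inv _ hd
    have hQl : Q ε * (ε ^ 2 • (1 : Matrix (Fin q) (Fin q) ℝ) + C₄ᵀ * C₄) = 1 := by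
      rw [hQ]; exact Matrix.nonsing_inv_mul _ hd
    have hQA : Q ε * (C₄ᵀ * C₄) = 1 - ε ^ 2 • Q ε := by
      have h := hQl
      rw [Matrix.mul_add, Matrix.mul_smul, Matrix.mul_one] at h
      exact eq_sub_of_add_eq' h
    have hQentry : ∀ k, |ε ^ 2 * Q ε i k| ≤ 1 := by
      intro k
      have hMy : (ε ^ 2 • (1 : Matrix (Fin q) (Fin q) ℝ) + C₄ᵀ * C₄) *ᵥ
          (Q ε *ᵥ Pi.single k 1) = Pi.single k 1 := by
        rw [Matrix.mulVec_mulVec, hQr, Matrix.one_mulVec]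
      have hb := Qaux_entry_bound C₄ ε hε.1 i k (Q ε *ᵥ Pi.single k 1) hMy
      simpa [Matrix.mulVec_single] using hb
    have hXS : ∀ a b, |X a b| ≤ S := by
      intro a b
      calc |X a b| ≤ ∑ b', |X a b'| :=
            Finset.single_le_sum (f := fun b' => |X a b'|)
              (fun _ _ => abs_nonneg _) (Finset.mem_univ b)
      _ ≤ S := Finset.single_le_sum (f := fun a' => ∑ b', |X a' b'|)
            (fun _ _ => Finset.sum_nonneg fun _ _ => abs_nonneg _) (Finset.mem_univ a)
    have hcol : ∑ k, |X k j| ≤ S := Finset.sum_le_sum fun k _ =>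
      Finset.single_le_sum (f := fun j' => |X k j'|)
        (fun _ _ => abs_nonneg _) (Finset.mem_univ j)
    have hkey : Q ε * C₂ᵀ = X - ε ^ 2 • (Q ε * X) := by
      rw [hX, ← Matrix.mul_assoc, hQA, Matrix.sub_mul, Matrix.one_mul, Matrix.smul_mul]
    rw [hkey]
    have h1 : (X - ε ^ 2 • (Q ε * X)) i j = X i j - ε ^ 2 * (Q ε * X) i j := by
      simp [Matrix.sub_apply]
    rw [h1]
    have h2 : |ε ^ 2 * (Q ε * X) i j| ≤ S := by
      calc |ε ^ 2 * (Q ε * X) i j| = |∑ k, ε ^ 2 * Q ε i k * X k j| := by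
            rw [Matrix.mul_apply, Finset.mul_sum]
            simp [mul_assoc]
      _ ≤ ∑ k, |ε ^ 2 * Q ε i k * X k j| := Finset.abs_sum_le_sum_abs _ _
      _ ≤ ∑ k, |X k j| := by
            refine Finset.sum_le_sum fun k _ => ?_
            rw [abs_mul]
            exact mul_le_of_le_one_left (abs_nonneg _) (hQentry k)
      _ ≤ S := hcol
    calc |X i j - ε ^ 2 * (Q ε * X) i j| ≤ |X i j| + |ε ^ 2 * (Q ε * X) i j| :=
          abs_sub _ _
    _ ≤ S + S := add_le_add (hXS i j) h2
end

section
/- Let D be a densely defined closed linear operator between Hilbert spaces H₁ and H₂, and let y ∈ H₂. For ε > 0, let x_ε be the unique minimizer of x ↦ ‖Dx − y‖² + ε²‖x‖² over dom(D). Then the equation Dx = y has a pseudosolution (a minimizer of ‖Dx − y‖ over dom(D)) if and only if ‖x_ε‖ remains bounded as ε → 0⁺. -/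
open LinearPMap Set Filter

set_option maxHeartbeats 2000000 in
/-- Tikhonov regularization criterion: for a densely defined closed operator `T` and `y ∈ H₂`,
if `xe ε` is the minimizer of `x ↦ ‖T x − y‖² + ε²‖x‖²` over `dom T` for each `ε > 0`, then
`T x = y` has a pseudosolution (a minimizer of `‖T x − y‖` over `dom T`) iff `‖xe ε‖`
stays bounded as `ε → 0⁺`. -/
theorem pseudosolution_iff_regularized_bounded
    {H₁ H₂ : Type*}
    [NormedAddCommGroup H₁] [InnerProductSpace ℝ H₁] [CompleteSpace H₁]
    [NormedAddCommGroup H₂] [InnerProductSpace ℝ H₂] [CompleteSpace H₂]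
    (T : H₁ →ₗ.[ℝ] H₂)
    (hdense : Dense (T.domain : Set H₁))
    (hclosed : T.IsClosed)
    (y : H₂) (xe : ℝ → T.domain)
    (hmin : ∀ ε : ℝ, 0 < ε → ∀ x : T.domain,
      ‖T (xe ε) - y‖ ^ 2 + ε ^ 2 * ‖(xe ε : H₁)‖ ^ 2 ≤
        ‖T x - y‖ ^ 2 + ε ^ 2 * ‖(x : H₁)‖ ^ 2) :
    (∃ xhat : T.domain, ∀ x : T.domain, ‖T xhat - y‖ ≤ ‖T x - y‖) ↔
      ∃ M : ℝ, ∀ᶠ ε in nhdsWithin (0:ℝ) (Ioi 0), ‖(xe ε : H₁)‖ ≤ M := by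
  constructor
  · rintro ⟨xhat, hxhat⟩
    refine ⟨‖(xhat : H₁)‖, Filter.eventually_of_mem self_mem_nhdsWithin ?_⟩
    intro ε hε
    have hε' : (0:ℝ) < ε := hε
    have h1 := hmin ε hε' xhat
    have h2 := hxhat (xe ε)
    have hε2 : 0 < ε ^ 2 := by positivity
    have hsq : ‖T xhat - y‖ ^ 2 ≤ ‖T (xe ε) - y‖ ^ 2 := by
      nlinarith [norm_nonneg (T xhat - y), norm_nonneg (T (xe ε) - y)]
    have h3 : ε ^ 2 * ‖(xe ε : H₁)‖ ^ 2 ≤ ε ^ 2 * ‖(xhat : H₁)‖ ^ 2 := by linarith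
    have h4 : ‖(xe ε : H₁)‖ ^ 2 ≤ ‖(xhat : H₁)‖ ^ 2 := (mul_le_mul_iff_right₀ hε2).1 h3
    nlinarith [norm_nonneg ((xe ε : H₁)), norm_nonneg ((xhat : H₁))]
  · rintro ⟨M, hM⟩
    -- extract a window (0, ε₀) on which the bound holds
    rw [eventually_nhdsWithin_iff, Metric.eventually_nhds_iff] at hM
    obtain ⟨ε₀, hε₀, hball⟩ := hM
    -- Key inequality from the parallelogram law and minimality.
    have key : ∀ ε δ : ℝ, 0 < ε → 0 < δ →
        ‖T (xe ε) - T (xe δ)‖ ^ 2 + ε ^ 2 * ‖((xe ε : H₁)) - ((xe δ : H₁))‖ ^ 2 ≤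
          2 * (ε ^ 2 - δ ^ 2) * (‖((xe δ : H₁))‖ ^ 2 - ‖((xe ε : H₁))‖ ^ 2) := by
      intro ε δ hε hδ
      set m : T.domain := (2⁻¹ : ℝ) • (xe ε + xe δ) with hm
      have hTm : T m - y = (2⁻¹ : ℝ) • ((T (xe ε) - y) + (T (xe δ) - y)) := by
        rw [hm, T.map_smul, T.map_add]
        rw [smul_add, smul_add, smul_sub, smul_sub]
        have h2y : ((2⁻¹ : ℝ) • y + (2⁻¹ : ℝ) • y) = y := by
          rw [← two_smul ℝ ((2⁻¹ : ℝ) • y), smul_smul]; norm_num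
        calc (2⁻¹ : ℝ) • (T (xe ε) : H₂) + (2⁻¹ : ℝ) • (T (xe δ) : H₂) - y
            = (2⁻¹ : ℝ) • (T (xe ε) : H₂) + (2⁻¹ : ℝ) • (T (xe δ) : H₂)
              - ((2⁻¹ : ℝ) • y + (2⁻¹ : ℝ) • y) := by rw [h2y]
          _ = (2⁻¹ : ℝ) • (T (xe ε) : H₂) - (2⁻¹ : ℝ) • y
              + ((2⁻¹ : ℝ) • (T (xe δ) : H₂) - (2⁻¹ : ℝ) • y) := by abel
      have hcm : ((m : H₁)) = (2⁻¹ : ℝ) • (((xe ε : H₁)) + ((xe δ : H₁))) := by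
        rw [hm]; rfl
      have h1 := hmin ε hε m
      have h2 := hmin δ hδ (xe ε)
      rw [hTm, hcm] at h1
      have n1 : ‖(2⁻¹ : ℝ) • ((T (xe ε) - y) + (T (xe δ) - y))‖ =
          2⁻¹ * ‖(T (xe ε) - y) + (T (xe δ) - y)‖ := by
        rw [norm_smul, Real.norm_eq_abs]; norm_num
      have n2 : ‖(2⁻¹ : ℝ) • (((xe ε : H₁)) + ((xe δ : H₁)))‖ =
          2⁻¹ * ‖((xe ε : H₁)) + ((xe δ : H₁))‖ := by
        rw [norm_smul, Real.norm_eq_abs]; norm_num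
      rw [n1, n2] at h1
      have p1 : ‖(T (xe ε) - y) + (T (xe δ) - y)‖ ^ 2 + ‖(T (xe ε) - y) - (T (xe δ) - y)‖ ^ 2 =
          2 * (‖T (xe ε) - y‖ ^ 2 + ‖T (xe δ) - y‖ ^ 2) := by
        rw [norm_add_sq_real (T (xe ε) - y) (T (xe δ) - y),
          norm_sub_sq_real (T (xe ε) - y) (T (xe δ) - y)]
        ring
      have p2 : ‖((xe ε : H₁)) + ((xe δ : H₁))‖ ^ 2 + ‖((xe ε : H₁)) - ((xe δ : H₁))‖ ^ 2 =
          2 * (‖((xe ε : H₁))‖ ^ 2 + ‖((xe δ : H₁))‖ ^ 2) := by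
        rw [norm_add_sq_real ((xe ε : H₁)) ((xe δ : H₁)),
          norm_sub_sq_real ((xe ε : H₁)) ((xe δ : H₁))]
        ring
      have e2 : (T (xe ε) : H₂) - T (xe δ) = (T (xe ε) - y) - (T (xe δ) - y) := by abel
      rw [e2]
      nlinarith [h1, h2, p1, p2]
    -- the sequence εₙ ↓ 0, obtained abstractly
    obtain ⟨u, hupos, hult, hu_anti, hu0⟩ :
        ∃ u : ℕ → ℝ, (∀ n, 0 < u n) ∧ (∀ n, u n < ε₀) ∧
          (∀ n m : ℕ, n < m → u m < u n) ∧ Tendsto u atTop (nhds 0) := by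
      refine ⟨fun n => (ε₀ / 2) * (1 / ((n : ℝ) + 1)), ?_, ?_, ?_, ?_⟩
      · intro n
        have h0 : (0:ℝ) < (n:ℝ) + 1 := by positivity
        positivity
      · intro n
        have hcast : (0:ℝ) ≤ (n:ℝ) := Nat.cast_nonneg n
        have h1 : (1:ℝ) / ((n:ℝ) + 1) ≤ 1 := by
          rw [div_le_one (by positivity)]; linarith
        have h2 : (ε₀ / 2) * (1 / ((n:ℝ) + 1)) ≤ ε₀ / 2 := by
          have := mul_le_mul_of_nonneg_left h1 (by positivity : (0:ℝ) ≤ ε₀ / 2)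
          simpa using this
        linarith
      · intro n m hnm
        have h1 : ((n : ℝ) + 1) < ((m : ℝ) + 1) := by
          have : (n : ℝ) < m := by exact_mod_cast hnm
          linarith
        have h2 : (1 : ℝ) / ((m : ℝ) + 1) < 1 / ((n : ℝ) + 1) :=
          one_div_lt_one_div_of_lt (by positivity) h1
        exact mul_lt_mul_of_pos_left h2 (by positivity)
      · have h := tendsto_one_div_add_atTop_nhds_zero_nat.const_mul (ε₀ / 2)
        rw [mul_zero] at h
        exact h
    have hMbound : ∀ n, ‖((xe (u n) : H₁))‖ ≤ M := by
      intro n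
      have hd : dist (u n) 0 < ε₀ := by
        rw [Real.dist_eq, sub_zero, abs_of_pos (hupos n)]; exact hult n
      exact hball hd (Set.mem_Ioi.mpr (hupos n))
    have hGmono : Monotone (fun n => ‖((xe (u n) : H₁))‖ ^ 2) := by
      intro n m hnm
      rcases eq_or_lt_of_le hnm with h | h
      · rw [h]
      · have hlt := hu_anti n m h
        have hk := key (u n) (u m) (hupos n) (hupos m)
        have hsq : 0 < (u n) ^ 2 - (u m) ^ 2 := by nlinarith [hupos m]
        simp only
        nlinarith [sq_nonneg ‖T (xe (u n)) - T (xe (u m))‖,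
          mul_nonneg (sq_nonneg (u n)) (sq_nonneg ‖((xe (u n) : H₁)) - ((xe (u m) : H₁))‖)]
    have hbdd : BddAbove (Set.range (fun n => ‖((xe (u n) : H₁))‖ ^ 2)) := by
      refine ⟨M ^ 2, ?_⟩
      rintro _ ⟨n, rfl⟩
      have := hMbound n
      show ‖((xe (u n) : H₁))‖ ^ 2 ≤ M ^ 2
      nlinarith [norm_nonneg ((xe (u n) : H₁))]
    obtain ⟨L, hGtend, hGleL, hLnonneg⟩ :
        ∃ L : ℝ, Tendsto (fun n => ‖((xe (u n) : H₁))‖ ^ 2) atTop (nhds L) ∧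
          (∀ n, ‖((xe (u n) : H₁))‖ ^ 2 ≤ L) ∧ 0 ≤ L := by
      refine ⟨⨆ n, ‖((xe (u n) : H₁))‖ ^ 2, tendsto_atTop_ciSup hGmono hbdd,
        fun n => le_ciSup hbdd n, ?_⟩
      exact le_trans (by positivity) (le_ciSup hbdd 0)
    -- the estimates for n ≥ N
    have est : ∀ N n : ℕ, N ≤ n →
        ‖((xe (u n) : H₁)) - ((xe (u N) : H₁))‖ ^ 2 ≤
            2 * (‖((xe (u n) : H₁))‖ ^ 2 - ‖((xe (u N) : H₁))‖ ^ 2) ∧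
        ‖T (xe (u n)) - T (xe (u N))‖ ^ 2 ≤
            2 * (u N) ^ 2 * (‖((xe (u n) : H₁))‖ ^ 2 - ‖((xe (u N) : H₁))‖ ^ 2) := by
      intro N n hNn
      have hGd : 0 ≤ ‖((xe (u n) : H₁))‖ ^ 2 - ‖((xe (u N) : H₁))‖ ^ 2 := by
        have := hGmono hNn; simp only at this; linarith
      rcases eq_or_lt_of_le hNn with h | h
      · subst h
        constructor
        · simp
        · simp
      · have hlt := hu_anti N n h
        have hk := key (u N) (u n) (hupos N) (hupos n)
        have huN2 : 0 < (u N) ^ 2 := pow_pos (hupos N) 2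
        constructor
        · rw [norm_sub_rev]
          nlinarith [sq_nonneg ‖T (xe (u N)) - T (xe (u n))‖,
            mul_nonneg (sq_nonneg (u n)) hGd]
        · rw [norm_sub_rev]
          nlinarith [mul_nonneg (sq_nonneg (u N))
            (sq_nonneg ‖((xe (u N) : H₁)) - ((xe (u n) : H₁))‖),
            mul_nonneg (sq_nonneg (u n)) hGd]
    -- Cauchy sequences
    have hScauchy : CauchySeq (fun n => ((xe (u n) : H₁))) := by
      rw [Metric.cauchySeq_iff']
      intro η hη
      have hev : ∀ᶠ n in atTop, L - η ^ 2 / 2 < ‖((xe (u n) : H₁))‖ ^ 2 :=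
        hGtend.eventually (eventually_gt_nhds (by nlinarith))
      obtain ⟨N, hN⟩ := hev.exists
      refine ⟨N, fun n hn => ?_⟩
      have h1 := (est N n hn).1
      have h2 := hGleL n
      rw [dist_eq_norm]
      nlinarith [norm_nonneg (((xe (u n) : H₁)) - ((xe (u N) : H₁)))]
    have hZcauchy : CauchySeq (fun n => (T (xe (u n)) : H₂)) := by
      rw [Metric.cauchySeq_iff']
      intro η hη
      have htend : Tendsto (fun n => 2 * (u n) ^ 2 * (L + 1)) atTop (nhds 0) := by
        have h := ((hu0.pow 2).const_mul 2).mul_const (L + 1)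
        simpa using h
      have hev : ∀ᶠ n in atTop, 2 * (u n) ^ 2 * (L + 1) < η ^ 2 :=
        htend.eventually (eventually_lt_nhds (by positivity))
      obtain ⟨N, hN⟩ := hev.exists
      refine ⟨N, fun n hn => ?_⟩
      have h1 := (est N n hn).2
      have h2 : ‖((xe (u n) : H₁))‖ ^ 2 - ‖((xe (u N) : H₁))‖ ^ 2 ≤ L + 1 := by
        have := hGleL n
        have : (0:ℝ) ≤ ‖((xe (u N) : H₁))‖ ^ 2 := by positivity
        linarith [hGleL n]
      have huN2 : (0:ℝ) ≤ 2 * (u N) ^ 2 := by positivity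
      rw [dist_eq_norm]
      nlinarith [norm_nonneg ((T (xe (u n)) : H₂) - T (xe (u N))),
        mul_le_mul_of_nonneg_left h2 huN2]
    obtain ⟨xh, hxh⟩ := cauchySeq_tendsto_of_complete hScauchy
    obtain ⟨zh, hzh⟩ := cauchySeq_tendsto_of_complete hZcauchy
    have hmem : (xh, zh) ∈ (T.graph : Set (H₁ × H₂)) := by
      refine hclosed.mem_of_tendsto (hxh.prodMk_nhds hzh)
        (Filter.Eventually.of_forall fun n => ?_)
      exact T.mem_graph (xe (u n))
    rw [SetLike.mem_coe, T.mem_graph_iff] at hmem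
    obtain ⟨x0, hx0c, hx0T⟩ := hmem
    refine ⟨x0, fun b => ?_⟩
    have hlim1 : Tendsto (fun n => ‖(T (xe (u n)) : H₂) - y‖ ^ 2) atTop
        (nhds (‖zh - y‖ ^ 2)) :=
      ((hzh.sub tendsto_const_nhds).norm.pow 2)
    have hlim2 : Tendsto (fun n => ‖T b - y‖ ^ 2 + (u n) ^ 2 * ‖(b : H₁)‖ ^ 2) atTop
        (nhds (‖T b - y‖ ^ 2)) := by
      have h := ((hu0.pow 2).mul_const (‖(b : H₁)‖ ^ 2)).const_add (‖T b - y‖ ^ 2)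
      simpa using h
    have hle : ‖zh - y‖ ^ 2 ≤ ‖T b - y‖ ^ 2 := by
      refine le_of_tendsto_of_tendsto' hlim1 hlim2 fun n => ?_
      have := hmin (u n) (hupos n) b
      nlinarith [mul_nonneg (sq_nonneg (u n)) (sq_nonneg ‖((xe (u n) : H₁))‖)]
    have hx0T' : (T x0 : H₂) = zh := hx0T
    rw [hx0T']
    nlinarith [norm_nonneg (zh - y), norm_nonneg (T b - y)]
end
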